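/- arXiv:2002.11647 — 13 statements merged into one kernel-verified Lean document; each statement's English description precedes it below -/
import Mathlib

section
/- Let A be a commutative ring. Then for every ideal I ⊆ A one has dim_v(A/I) ≤ dim_v(A), and for every multiplicative subset S ⊆ A one has dim_v(S⁻¹A) ≤ dim_v(A). -/
/-- If `g : D₁ →+* D₂` is an injective map of domains such that every element of `D₂`
is a "fraction" of elements of `D₁`, then the fraction fields are isomorphic,
compatibly with `g`. -/
lemma exists_fracRingEquiv {D₁ D₂ : Type*} [CommRing D₁] [IsDomain D₁]
    [CommRing D₂] [IsDomain D₂]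
    (g : D₁ →+* D₂) (hinj : Function.Injective g)
    (hsurj : ∀ d : D₂, ∃ a b : D₁, b ≠ 0 ∧ d * g b = g a) :
    ∃ e : FractionRing D₂ ≃+* FractionRing D₁,
      ∀ x : D₁, e (algebraMap D₂ (FractionRing D₂) (g x))
        = algebraMap D₁ (FractionRing D₁) x := by
  letI : Algebra D₁ (FractionRing D₂) :=
    ((algebraMap D₂ (FractionRing D₂)).comp g).toAlgebra
  have hcomp : ∀ x : D₁, algebraMap D₁ (FractionRing D₂) x
      = algebraMap D₂ (FractionRing D₂) (g x) := fun x => rfl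
  have hι : Function.Injective (algebraMap D₂ (FractionRing D₂)) :=
    IsFractionRing.injective D₂ (FractionRing D₂)
  haveI : IsLocalization (nonZeroDivisors D₁) (FractionRing D₂) := by
    constructor
    constructor
    · intro y
      rw [hcomp]
      rw [isUnit_iff_ne_zero, Ne, ← (algebraMap D₂ (FractionRing D₂)).map_zero,
        hι.eq_iff, ← g.map_zero, hinj.eq_iff]
      exact nonZeroDivisors.ne_zero y.2
    · intro z
      obtain ⟨d₁, d₂, hd⟩ := IsLocalization.exists_mk'_eq (nonZeroDivisors D₂) z
      have hz : z * algebraMap D₂ (FractionRing D₂) d₂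
          = algebraMap D₂ (FractionRing D₂) d₁ := by
        rw [← hd]; exact IsLocalization.mk'_spec _ d₁ d₂
      obtain ⟨a₁, b₁, hb₁, h₁⟩ := hsurj d₁
      obtain ⟨a₂, b₂, hb₂, h₂⟩ := hsurj d₂
      have hgb₂ : g b₂ ≠ 0 := fun h => hb₂ (hinj (by rwa [g.map_zero]))
      have hd₂ : (d₂ : D₂) ≠ 0 := nonZeroDivisors.ne_zero d₂.2
      have ha₂ : a₂ ≠ 0 := by
        intro h
        rw [h, g.map_zero] at h₂
        exact (mul_ne_zero hd₂ hgb₂) h₂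
      refine ⟨⟨a₁ * b₂, ⟨a₂ * b₁, mem_nonZeroDivisors_of_ne_zero
        (mul_ne_zero ha₂ hb₁)⟩⟩, ?_⟩
      simp only [hcomp, map_mul]
      calc z * (algebraMap D₂ (FractionRing D₂) (g a₂)
            * algebraMap D₂ (FractionRing D₂) (g b₁))
          = z * algebraMap D₂ (FractionRing D₂) d₂
            * algebraMap D₂ (FractionRing D₂) (g b₂)
            * algebraMap D₂ (FractionRing D₂) (g b₁) := by
            rw [← h₂, map_mul]; ring
        _ = algebraMap D₂ (FractionRing D₂) (d₁ * g b₁)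
            * algebraMap D₂ (FractionRing D₂) (g b₂) := by
            rw [hz, map_mul]; ring
        _ = algebraMap D₂ (FractionRing D₂) (g a₁)
            * algebraMap D₂ (FractionRing D₂) (g b₂) := by rw [h₁]
    · intro x y h
      rw [hcomp, hcomp] at h
      exact ⟨1, by rw [hinj (hι h)]⟩
  refine ⟨(IsLocalization.algEquiv (nonZeroDivisors D₁)
    (FractionRing D₂) (FractionRing D₁)).toRingEquiv, fun x => ?_⟩
  rw [← hcomp]
  exact (IsLocalization.algEquiv (nonZeroDivisors D₁)
    (FractionRing D₂) (FractionRing D₁)).commutes x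

/-- The valuative dimension of a commutative ring `A`, following Jaffard:
`dim_v A = sup` over primes `𝔭` of the supremum of the Krull dimensions (ranks) of
valuation rings `R` with `A/𝔭 ⊆ R ⊆ Frac(A/𝔭)`. -/
noncomputable def valuativeDim (A : Type*) [CommRing A] : WithBot ℕ∞ :=
  ⨆ (p : PrimeSpectrum A),
    ⨆ (R : ValuationSubring (FractionRing (A ⧸ p.asIdeal))),
      ⨆ (_ : Set.range (algebraMap (A ⧸ p.asIdeal) (FractionRing (A ⧸ p.asIdeal))) ⊆
          (R : Set (FractionRing (A ⧸ p.asIdeal)))),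
        ringKrullDim R

/-- The key comparison lemma: if for each prime `p` of `B` there is a prime `q` of `A`
and an injective map `A⧸q →+* B⧸p` with "birational" image, then
`dim_v B ≤ dim_v A`. -/
lemma valuativeDim_le_of_exists {A B : Type*} [CommRing A] [CommRing B]
    (H : ∀ p : PrimeSpectrum B, ∃ q : PrimeSpectrum A,
      ∃ g : (A ⧸ q.asIdeal) →+* (B ⧸ p.asIdeal), Function.Injective g ∧
        ∀ d : B ⧸ p.asIdeal, ∃ a b : A ⧸ q.asIdeal, b ≠ 0 ∧ d * g b = g a) :
    valuativeDim B ≤ valuativeDim A := by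
  refine iSup_le fun p => ?_
  obtain ⟨q, g, hinj, hsurj⟩ := H p
  obtain ⟨e, he⟩ := exists_fracRingEquiv g hinj hsurj
  refine iSup_le fun R => iSup_le fun hR => ?_
  set R' : ValuationSubring (FractionRing (A ⧸ q.asIdeal)) :=
    R.comap (e.symm : FractionRing (A ⧸ q.asIdeal) →+* FractionRing (B ⧸ p.asIdeal))
    with hR'def
  have hR' : Set.range (algebraMap (A ⧸ q.asIdeal) (FractionRing (A ⧸ q.asIdeal)))
      ⊆ (R' : Set (FractionRing (A ⧸ q.asIdeal))) := by
    rintro _ ⟨x, rfl⟩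
    show _ ∈ R'
    rw [hR'def, ValuationSubring.mem_comap]
    have : (e.symm : FractionRing (A ⧸ q.asIdeal) →+* FractionRing (B ⧸ p.asIdeal))
        (algebraMap (A ⧸ q.asIdeal) (FractionRing (A ⧸ q.asIdeal)) x)
        = algebraMap (B ⧸ p.asIdeal) (FractionRing (B ⧸ p.asIdeal)) (g x) := by
      rw [← he x, RingEquiv.coe_toRingHom, RingEquiv.symm_apply_apply]
    rw [this]
    exact hR ⟨g x, rfl⟩
  have hdim : ringKrullDim R = ringKrullDim R' := by
    refine ringKrullDim_eq_of_ringEquiv ?_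
    have hmem : ∀ x : FractionRing (B ⧸ p.asIdeal), x ∈ R ↔ e x ∈ R' := by
      intro x
      rw [hR'def, ValuationSubring.mem_comap]
      have : (e.symm : FractionRing (A ⧸ q.asIdeal) →+* FractionRing (B ⧸ p.asIdeal))
          (e x) = x := e.symm_apply_apply x
      rw [this]
    refine
      { toFun := fun r => ⟨e r, (hmem r).mp r.2⟩
        invFun := fun r => ⟨e.symm r, ValuationSubring.mem_comap.mp r.2⟩
        left_inv := fun r => Subtype.ext (e.symm_apply_apply _)
        right_inv := fun r => Subtype.ext (e.apply_symm_apply _)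
        map_mul' := fun x y => Subtype.ext (e.map_mul _ _)
        map_add' := fun x y => Subtype.ext (e.map_add _ _) }
  rw [hdim]
  refine le_trans ?_ (le_iSup _ q)
  refine le_trans ?_ (le_iSup _ R')
  exact le_iSup (fun _ : Set.range (algebraMap (A ⧸ q.asIdeal)
    (FractionRing (A ⧸ q.asIdeal))) ⊆ (R' : Set _) => ringKrullDim R') hR'

/-- For every ideal `I ⊆ A` one has `dim_v (A/I) ≤ dim_v A`, and for every
multiplicative subset `S ⊆ A` one has `dim_v (S⁻¹A) ≤ dim_v A`. -/
theorem valuativeDim_quotient_le_and_valuativeDim_localization_le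
    {A : Type*} [CommRing A] :
    (∀ I : Ideal A, valuativeDim (A ⧸ I) ≤ valuativeDim A) ∧
    (∀ S : Submonoid A, valuativeDim (Localization S) ≤ valuativeDim A) := by
  constructor
  · intro I
    refine valuativeDim_le_of_exists fun p => ?_
    haveI := p.isPrime
    refine ⟨⟨p.asIdeal.comap (Ideal.Quotient.mk I), inferInstance⟩,
      Ideal.quotientMap p.asIdeal (Ideal.Quotient.mk I) le_rfl,
      Ideal.quotientMap_injective, fun d => ?_⟩
    obtain ⟨x, rfl⟩ := Ideal.Quotient.mk_surjective d
    obtain ⟨a, rfl⟩ := Ideal.Quotient.mk_surjective x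
    exact ⟨Ideal.Quotient.mk _ a, 1, one_ne_zero, by
      rw [map_one, mul_one, Ideal.quotientMap_mk]⟩
  · intro S
    refine valuativeDim_le_of_exists fun p => ?_
    haveI := p.isPrime
    refine ⟨⟨p.asIdeal.comap (algebraMap A (Localization S)), inferInstance⟩,
      Ideal.quotientMap p.asIdeal (algebraMap A (Localization S)) le_rfl,
      Ideal.quotientMap_injective, fun d => ?_⟩
    obtain ⟨x, rfl⟩ := Ideal.Quotient.mk_surjective d
    obtain ⟨a, s, rfl⟩ := IsLocalization.exists_mk'_eq S x
    refine ⟨Ideal.Quotient.mk _ a, Ideal.Quotient.mk _ (s : A), ?_, ?_⟩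
    · intro h
      have hu : IsUnit (Ideal.Quotient.mk p.asIdeal (algebraMap A (Localization S) s)) :=
        (IsLocalization.map_units (Localization S) s).map (Ideal.Quotient.mk p.asIdeal)
      rw [← Ideal.quotientMap_mk (H := le_rfl), h, map_zero] at hu
      exact hu.ne_zero rfl
    · rw [Ideal.quotientMap_mk, Ideal.quotientMap_mk, ← map_mul,
        IsLocalization.mk'_spec]
end

section
/- Let A be a commutative ring and I ⊆ A an ideal such that every prime ideal of A containing I strictly contains some other prime ideal of A (equivalently, the closed set V(I) ⊆ Spec A contains no minimal prime of A). Then dim_v(A/I) + 1 ≤ dim_v(A). -/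
private lemma myaux_lt_nat {a : WithBot ℕ∞} {m : ℕ} :
    a < (m : WithBot ℕ∞) → a ≤ (if m = 0 then (⊥ : WithBot ℕ∞) else ((m - 1 : ℕ) : WithBot ℕ∞)) := by
  induction a using WithBot.recBotCoe with
  | bot => intro _; exact bot_le
  | coe e =>
    induction e using ENat.recTopCoe with
    | top =>
      intro h
      exact absurd h (not_lt.mpr (by exact_mod_cast le_top (a := ((m : ℕ∞)))))
    | coe j =>
      intro h
      have hj : j < m := by exact_mod_cast h
      obtain ⟨k, rfl⟩ : ∃ k, m = k + 1 := ⟨m - 1, by omega⟩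
      rw [if_neg (by omega)]
      have : (k + 1 - 1 : ℕ) = k := by omega
      rw [this]
      exact_mod_cast Nat.lt_succ_iff.mp hj

private lemma myaux_exists_of_nat_le_iSup {ι : Sort*} (f : ι → WithBot ℕ∞) (m : ℕ)
    (h : (m : WithBot ℕ∞) ≤ ⨆ i, f i) : ∃ i, (m : WithBot ℕ∞) ≤ f i := by
  by_contra hc
  push_neg at hc
  have hle := le_trans h (iSup_le fun i => myaux_lt_nat (hc i))
  rcases Nat.eq_zero_or_pos m with hm | hm
  · subst hm; simp at hle
  · rw [if_neg hm.ne'] at hle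
    have : (m : ℕ) ≤ m - 1 := by exact_mod_cast hle
    omega

private lemma myaux_le_of_forall_nat_le {x y : WithBot ℕ∞}
    (h : ∀ n : ℕ, (n : WithBot ℕ∞) ≤ x → (n : WithBot ℕ∞) ≤ y) : x ≤ y := by
  induction x using WithBot.recBotCoe with
  | bot => exact bot_le
  | coe e =>
    induction e using ENat.recTopCoe with
    | top =>
      have h' : ∀ n : ℕ, (n : WithBot ℕ∞) ≤ y := fun n =>
        h n (by exact_mod_cast le_top (a := ((n : ℕ∞))))
      induction y using WithBot.recBotCoe with
      | bot => simpa using h' 0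
      | coe f =>
        induction f using ENat.recTopCoe with
        | top => exact le_top
        | coe j =>
          have hj := h' (j + 1)
          have : (j + 1 : ℕ) ≤ j := by exact_mod_cast hj
          omega
    | coe j =>
      exact_mod_cast h j (by exact_mod_cast le_refl j)

private lemma myaux_add_one_cancel {x : WithBot ℕ∞} {m : ℕ}
    (h : ((m + 1 : ℕ) : WithBot ℕ∞) ≤ x + 1) : (m : WithBot ℕ∞) ≤ x := by
  induction x using WithBot.recBotCoe with
  | bot =>
    exfalso
    rw [WithBot.bot_add] at h
    exact absurd h (by simp)
  | coe e =>
    have h2 : ((m : ℕ∞) + 1 : ℕ∞) ≤ e + 1 := by exact_mod_cast h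
    have : (m : ℕ∞) ≤ e := by
      rwa [ENat.add_le_add_iff_right (by simp : (1 : ℕ∞) ≠ ⊤)] at h2
    exact_mod_cast this


open IsLocalRing in
private lemma myaux_strictMono' {R S : Type*} [CommRing R] [IsDomain R] [ValuationRing R]
    [IsLocalRing R] [CommRing S] [IsDomain S] [ValuationRing S] [IsLocalRing S]
    (ρ : R →+* S) (hinj : Function.Injective ρ)
    (hm : ∀ r : R, r ∈ maximalIdeal R → ρ r ∈ maximalIdeal S) :
    ∃ f : PrimeSpectrum R → PrimeSpectrum S, StrictMono f := by
  -- every element of the image ideal has the form ρ a * s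
  have hform : ∀ (𝔭 : Ideal R) (y : S), y ∈ Ideal.map ρ 𝔭 → ∃ a ∈ 𝔭, ∃ s : S, y = ρ a * s := by
    intro 𝔭 y hy
    rw [Ideal.map] at hy
    refine Submodule.span_induction ?_ ?_ ?_ ?_ hy
    · rintro x ⟨a, ha, rfl⟩; exact ⟨a, ha, 1, (mul_one _).symm⟩
    · exact ⟨0, 𝔭.zero_mem, 0, by simp⟩
    · rintro x y' _ _ ⟨a, ha, s, rfl⟩ ⟨b, hb, t, rfl⟩
      obtain ⟨c, hc | hc⟩ := ValuationRing.cond (ρ a * s) (ρ b * t)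
      · exact ⟨a, ha, s + s * c, by rw [mul_add, ← mul_assoc, hc]⟩
      · exact ⟨b, hb, t + t * c, by rw [mul_add, ← mul_assoc, hc, add_comm]⟩
    · rintro r x _ ⟨a, ha, s, rfl⟩
      exact ⟨a, ha, r * s, by rw [smul_eq_mul]; ring⟩
  -- nonunit fact
  have hnu : ∀ (𝔭 : Ideal R), 𝔭.IsPrime → ∀ a ∈ 𝔭, ¬ IsUnit (ρ a) := by
    intro 𝔭 h𝔭 a ha hu
    exact (mem_maximalIdeal _).mp (hm a (le_maximalIdeal h𝔭.ne_top ha)) hu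
  -- dividing out powers
  have hpow : ∀ (𝔭 : Ideal R), 𝔭.IsPrime → ∀ (x : R), x ∉ 𝔭 → ∀ (k : ℕ) (a : R), a ∈ 𝔭 →
      ∃ a', a' ∈ 𝔭 ∧ a = x ^ k * a' := by
    intro 𝔭 h𝔭 x hx k
    induction k with
    | zero => intro a ha; exact ⟨a, ha, by rw [pow_zero, one_mul]⟩
    | succ k ih =>
      intro a ha
      obtain ⟨a', ha', rfl⟩ := ih a ha
      obtain ⟨c, hc | hc⟩ := ValuationRing.cond a' x
      · exact absurd (hc ▸ Ideal.mul_mem_right c 𝔭 ha') hx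
      · have hc𝔭 : c ∈ 𝔭 := (h𝔭.mem_or_mem (hc ▸ ha')).resolve_left hx
        exact ⟨c, hc𝔭, by rw [← hc]; ring⟩
  -- prime of the pushed ideal
  have hprime : ∀ p : PrimeSpectrum R, ((Ideal.map ρ p.asIdeal).radical).IsPrime := by
    intro p
    constructor
    · rw [Ne, Ideal.radical_eq_top, Ideal.eq_top_iff_one]
      intro h1
      obtain ⟨a, ha, s, hs⟩ := hform _ _ h1
      exact hnu _ p.2 a ha (IsUnit.of_mul_eq_one s hs.symm)
    · intro a b hab
      obtain ⟨c, hc | hc⟩ := ValuationRing.cond a b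
      · refine Or.inr (Ideal.mem_radical_of_pow_mem (m := 2) ?_)
        have : b ^ 2 = (a * b) * c := by rw [← hc]; ring
        rw [this]
        exact Ideal.mul_mem_right c _ hab
      · refine Or.inl (Ideal.mem_radical_of_pow_mem (m := 2) ?_)
        have : a ^ 2 = (a * b) * c := by rw [← hc]; ring
        rw [this]
        exact Ideal.mul_mem_right c _ hab
  -- comap returns the original ideal
  have hcom : ∀ p : PrimeSpectrum R,
      Ideal.comap ρ ((Ideal.map ρ p.asIdeal).radical) = p.asIdeal := by
    intro p
    refine le_antisymm ?_ ?_
    · intro x hx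
      obtain ⟨k, hk⟩ := hx
      by_contra hxp
      rw [← map_pow] at hk
      obtain ⟨a, ha, s, hs⟩ := hform _ _ hk
      obtain ⟨a', ha', rfl⟩ := hpow _ p.2 x hxp k a ha
      have hx0 : ρ (x ^ k) ≠ 0 := fun h =>
        pow_ne_zero k (fun e => hxp (by rw [e]; exact p.asIdeal.zero_mem))
          (hinj (h.trans (map_zero ρ).symm))
      have h1 : (1 : S) = ρ a' * s := by
        apply mul_left_cancel₀ hx0
        calc ρ (x ^ k) * 1 = ρ (x ^ k) := mul_one _
        _ = ρ (x ^ k * a') * s := hs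
        _ = ρ (x ^ k) * (ρ a' * s) := by rw [map_mul, mul_assoc]
      exact hnu _ p.2 a' ha' (IsUnit.of_mul_eq_one s h1.symm)
    · exact le_trans Ideal.le_comap_map (Ideal.comap_mono Ideal.le_radical)
  refine ⟨fun p => ⟨(Ideal.map ρ p.asIdeal).radical, hprime p⟩, ?_⟩
  intro p q hpq
  rw [← PrimeSpectrum.asIdeal_lt_asIdeal]
  refine lt_of_le_of_ne (Ideal.radical_mono (Ideal.map_mono ?_)) ?_
  · rw [PrimeSpectrum.asIdeal_le_asIdeal]; exact hpq.le
  · intro e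
    refine hpq.ne ?_
    have := congrArg (Ideal.comap ρ) e
    rw [hcom p, hcom q] at this
    exact PrimeSpectrum.ext this

set_option maxHeartbeats 2000000 in
open IsLocalRing in
private lemma myaux_main {A : Type*} [CommRing A] (q : Ideal A) (hq : q.IsPrime)
    {D : Type*} [CommRing D] [IsDomain D] (π₂ : A →+* D) (hsurj : Function.Surjective π₂)
    (hlt : q < RingHom.ker π₂)
    (R : ValuationSubring (FractionRing D))
    (hR : Set.range (algebraMap D (FractionRing D)) ⊆ (R : Set (FractionRing D)))
    (n : ℕ) (hn : (n : WithBot ℕ∞) ≤ ringKrullDim R) :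
    ((n + 1 : ℕ) : WithBot ℕ∞) ≤ valuativeDim A := by
  classical
  haveI := hq
  let B := A ⧸ q
  let K := FractionRing B
  let F := FractionRing D
  let mkq : A →+* B := Ideal.Quotient.mk q
  let P : Ideal B := (RingHom.ker π₂).map mkq
  haveI hkerprime : (RingHom.ker π₂).IsPrime := RingHom.ker_isPrime π₂
  have hkermkq : RingHom.ker mkq = q := Ideal.mk_ker
  haveI hPprime : P.IsPrime :=
    Ideal.map_isPrime_of_surjective Ideal.Quotient.mk_surjective (by rw [hkermkq]; exact hlt.le)
  have hcomapP : Ideal.comap mkq P = RingHom.ker π₂ := by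
    rw [Ideal.comap_map_of_surjective mkq Ideal.Quotient.mk_surjective,
      ← RingHom.ker_eq_comap_bot, hkermkq, sup_eq_left.mpr hlt.le]
  have hmemP : ∀ a : A, mkq a ∈ P ↔ a ∈ RingHom.ker π₂ := fun a => by
    rw [← hcomapP]; rfl
  -- the localization C at P, mapping to K
  let C := Localization.AtPrime P
  have hunits : ∀ y : P.primeCompl, IsUnit (algebraMap B K y) := by
    intro y
    refine IsUnit.mk0 _ (IsFractionRing.to_map_ne_zero_of_mem_nonZeroDivisors ?_)
    exact mem_nonZeroDivisors_of_ne_zero (fun e => y.2 (by rw [e]; exact P.zero_mem))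
  let fC : C →+* K := IsLocalization.lift hunits
  obtain ⟨V, hV, hVloc⟩ := IsLocalRing.exists_factor_valuationRing fC
  let fV : C →+* V := fC.codRestrict V.toSubring hV
  let gB : B →+* V := fV.comp (algebraMap B C)
  have hgB : ∀ b : B, (gB b : K) = algebraMap B K b := fun b => IsLocalization.lift_eq hunits b
  -- the residue field L of V
  let L := ResidueField V
  let πV : V →+* L := residue _
  let ψ : A →+* L := πV.comp (gB.comp mkq)
  have hψ0 : ∀ a : A, ψ a = 0 ↔ a ∈ RingHom.ker π₂ := by
    intro a
    have h1 : ψ a = 0 ↔ gB (mkq a) ∈ maximalIdeal V := Ideal.Quotient.eq_zero_iff_mem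
    rw [h1, mem_maximalIdeal, mem_nonunits_iff]
    constructor
    · intro hnu
      by_contra ha
      have hcompl : mkq a ∈ P.primeCompl := fun hmem => ha ((hmemP a).1 hmem)
      exact hnu (((IsLocalization.AtPrime.isUnit_to_map_iff C P (mkq a)).mpr hcompl).map fV)
    · intro ha hu
      have h2 := hVloc.map_nonunit _ hu
      rw [IsLocalization.AtPrime.isUnit_to_map_iff C P] at h2
      exact h2 ((hmemP a).2 ha)
  let e := RingHom.quotientKerEquivOfSurjective hsurj
  let ψbar : A ⧸ RingHom.ker π₂ →+* L :=
    Ideal.Quotient.lift (RingHom.ker π₂) ψ (fun a ha => (hψ0 a).2 ha)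
  let φ : D →+* L := ψbar.comp (e.symm.toRingHom)
  have hφ : ∀ a : A, φ (π₂ a) = ψ a := by
    intro a
    have h1 : e (Ideal.Quotient.mk (RingHom.ker π₂) a) = π₂ a := RingHom.kerLift_mk π₂ a
    have h2 : e.symm (π₂ a) = Ideal.Quotient.mk (RingHom.ker π₂) a := by
      rw [← h1, RingEquiv.symm_apply_apply]
    show ψbar (e.symm (π₂ a)) = ψ a
    rw [h2]
    exact Ideal.Quotient.lift_mk _ _ _
  have hφinj : Function.Injective φ := by
    have h1 : Function.Injective ψbar :=
      RingHom.lift_injective_of_ker_le_ideal _ (fun a ha => (hψ0 a).2 ha)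
        (fun a ha => (hψ0 a).1 (RingHom.mem_ker.mp ha))
    exact h1.comp e.symm.injective
  -- the embedding of F into L extending φ
  let ι : F →+* L := IsFractionRing.lift hφinj
  have hι : ∀ d : D, ι (algebraMap D F d) = φ d := fun d => IsFractionRing.lift_algebraMap hφinj d
  -- extend R to a valuation subring S of L
  let gR : R →+* L := ι.comp R.subtype
  obtain ⟨S, hS, hSloc⟩ := IsLocalRing.exists_factor_valuationRing gR
  let ρ : R →+* S := gR.codRestrict S.toSubring hS
  have hρinj : Function.Injective ρ := by
    intro r r' hrr
    have h1 : ι r = ι r' := congrArg Subtype.val hrr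
    exact Subtype.ext (ι.injective h1)
  have hρm : ∀ r : R, r ∈ maximalIdeal R → ρ r ∈ maximalIdeal S := by
    intro r hr
    rw [mem_maximalIdeal, mem_nonunits_iff] at hr ⊢
    exact fun hu => hr (hSloc.map_nonunit _ hu)
  obtain ⟨fRS, hfRS⟩ := myaux_strictMono' ρ hρinj hρm
  -- the composite valuation subring W of K
  let Wsub : Subring K := (S.toSubring.comap πV).map V.subtype
  have hmemW : ∀ x : K, x ∈ Wsub ↔ ∃ hx : x ∈ V, πV ⟨x, hx⟩ ∈ S := by
    intro x
    constructor
    · intro hx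
      obtain ⟨y, hy, rfl⟩ := Subring.mem_map.mp hx
      refine ⟨y.2, ?_⟩
      have h1 : (⟨(V.subtype y : K), y.2⟩ : V) = y := Subtype.ext rfl
      rw [h1]
      exact Subring.mem_comap.mp hy
    · rintro ⟨hx, hxS⟩
      exact Subring.mem_map.mpr ⟨⟨x, hx⟩, Subring.mem_comap.mpr hxS, rfl⟩
  have hmemor : ∀ x : K, x ∈ Wsub ∨ x⁻¹ ∈ Wsub := by
    intro x
    by_cases hxV : x ∈ V
    · by_cases hxS : πV ⟨x, hxV⟩ ∈ S
      · exact Or.inl ((hmemW x).mpr ⟨hxV, hxS⟩)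
      · right
        have h0 : πV ⟨x, hxV⟩ ≠ 0 := fun h => hxS (by rw [h]; exact S.zero_mem)
        have hunit : IsUnit (⟨x, hxV⟩ : V) := by
          by_contra hnu
          exact h0 (Ideal.Quotient.eq_zero_iff_mem.mpr
            ((mem_maximalIdeal _).mpr (mem_nonunits_iff.mpr hnu)))
        obtain ⟨u, hu⟩ := hunit
        have huv : ((u⁻¹ : Vˣ) : V) * ⟨x, hxV⟩ = 1 := by rw [← hu]; exact u.inv_mul
        have hxinv : ((((u⁻¹ : Vˣ) : V)) : K) = x⁻¹ := by
          have h2 : ((((u⁻¹ : Vˣ) : V)) : K) * x = 1 := congrArg Subtype.val huv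
          exact eq_inv_of_mul_eq_one_left h2
        have hSinv : (πV ⟨x, hxV⟩)⁻¹ ∈ S := (S.mem_or_inv_mem _).resolve_left hxS
        have hπinv : πV ((u⁻¹ : Vˣ) : V) = (πV ⟨x, hxV⟩)⁻¹ :=
          eq_inv_of_mul_eq_one_left (by rw [← map_mul, huv, map_one])
        refine Subring.mem_map.mpr ⟨((u⁻¹ : Vˣ) : V), Subring.mem_comap.mpr ?_, hxinv⟩
        rw [hπinv]
        exact hSinv
    · right
      have hxinvV : x⁻¹ ∈ V := (V.mem_or_inv_mem x).resolve_left hxV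
      have hnu : ¬ IsUnit (⟨x⁻¹, hxinvV⟩ : V) := by
        rintro ⟨u, hu⟩
        have h1 : ((u⁻¹ : Vˣ) : V) * ⟨x⁻¹, hxinvV⟩ = 1 := by rw [← hu]; exact u.inv_mul
        have h2 : ((((u⁻¹ : Vˣ) : V)) : K) * x⁻¹ = 1 := congrArg Subtype.val h1
        have h3 : ((((u⁻¹ : Vˣ) : V)) : K) = (x⁻¹)⁻¹ := eq_inv_of_mul_eq_one_left h2
        rw [inv_inv] at h3
        exact hxV (h3 ▸ ((u⁻¹ : Vˣ) : V).2)
      have h4 : πV ⟨x⁻¹, hxinvV⟩ = 0 := Ideal.Quotient.eq_zero_iff_mem.mpr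
        ((mem_maximalIdeal _).mpr (mem_nonunits_iff.mpr hnu))
      refine Subring.mem_map.mpr ⟨⟨x⁻¹, hxinvV⟩, Subring.mem_comap.mpr ?_, rfl⟩
      rw [h4]
      exact S.zero_mem
  let W : ValuationSubring K := ⟨Wsub, hmemor⟩
  have hWB : Set.range (algebraMap B K) ⊆ (W : Set K) := by
    rintro _ ⟨b, rfl⟩
    obtain ⟨a, rfl⟩ := Ideal.Quotient.mk_surjective (I := q) b
    refine Subring.mem_map.mpr ⟨gB (mkq a), Subring.mem_comap.mpr ?_, hgB (mkq a)⟩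
    have h1 : πV (gB (mkq a)) = ψ a := rfl
    have h2 : ψ a = gR ⟨algebraMap D F (π₂ a), hR ⟨π₂ a, rfl⟩⟩ := by
      rw [← hφ a, ← hι (π₂ a)]; rfl
    rw [h1, h2]
    exact hS _
  -- the surjection τ from W onto S
  have hle : W.toSubring ≤ V.toSubring := by
    intro x hx
    obtain ⟨y, _, rfl⟩ := Subring.mem_map.mp hx
    exact y.2
  let τ0 : W →+* V := Subring.inclusion hle
  let τ1 : W →+* L := πV.comp τ0
  have hτ1 : ∀ w : W, τ1 w ∈ S.toSubring := by
    rintro ⟨x, hx⟩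
    obtain ⟨hxV', hxS'⟩ := (hmemW x).mp hx
    have h1 : τ0 ⟨x, hx⟩ = ⟨x, hxV'⟩ := Subtype.ext rfl
    show πV (τ0 ⟨x, hx⟩) ∈ S.toSubring
    rw [h1]
    exact hxS'
  let τ : W →+* S := τ1.codRestrict S.toSubring hτ1
  have hτsurj : Function.Surjective τ := by
    rintro ⟨s, hs⟩
    obtain ⟨v, hv⟩ := IsLocalRing.residue_surjective (R := V) s
    have hvW : (v : K) ∈ Wsub :=
      Subring.mem_map.mpr ⟨v, Subring.mem_comap.mpr (by rw [show πV v = s from hv]; exact hs), rfl⟩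
    refine ⟨⟨(v : K), hvW⟩, ?_⟩
    apply Subtype.ext
    have h1 : τ0 ⟨(v : K), hvW⟩ = v := Subtype.ext rfl
    show πV (τ0 ⟨(v : K), hvW⟩) = s
    rw [h1]
    exact hv
  -- build the chain
  have hn' : (n : WithBot ℕ∞) ≤ ⨆ (p : LTSeries (PrimeSpectrum R)), (p.length : WithBot ℕ∞) := hn
  obtain ⟨pR, hpR⟩ := myaux_exists_of_nat_le_iSup _ n hn'
  have hnlen : n ≤ pR.length := by exact_mod_cast hpR
  let pS : LTSeries (PrimeSpectrum S) := pR.map fRS hfRS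
  have hτmono : StrictMono (fun p : PrimeSpectrum S => PrimeSpectrum.comap τ p) := by
    intro a b hab
    rw [← PrimeSpectrum.asIdeal_lt_asIdeal]
    refine lt_of_le_of_ne (Ideal.comap_mono hab.le) ?_
    intro e
    exact hab.ne (PrimeSpectrum.ext (Ideal.comap_injective_of_surjective τ hτsurj e))
  let pW : LTSeries (PrimeSpectrum W) := pS.map _ hτmono
  obtain ⟨a0, ha0k, ha0q⟩ := SetLike.exists_of_lt hlt
  have hx0W : algebraMap B K (mkq a0) ∈ W := hWB ⟨mkq a0, rfl⟩
  let x0 : W := ⟨algebraMap B K (mkq a0), hx0W⟩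
  have hx0ne : x0 ≠ 0 := by
    intro e
    have h1 : algebraMap B K (mkq a0) = 0 := congrArg Subtype.val e
    have h2 : mkq a0 = 0 := IsFractionRing.injective B K (by rw [h1, map_zero])
    exact ha0q (Ideal.Quotient.eq_zero_iff_mem.mp h2)
  have hx0ker : τ x0 = 0 := by
    apply Subtype.ext
    have h1 : τ0 x0 = gB (mkq a0) := Subtype.ext (hgB (mkq a0)).symm
    show πV (τ0 x0) = 0
    rw [h1]
    exact (hψ0 a0).mpr ha0k
  have hbotlt : (⟨⊥, Ideal.bot_prime⟩ : PrimeSpectrum W) < pW.head := by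
    rw [← PrimeSpectrum.asIdeal_lt_asIdeal]
    refine lt_of_le_of_ne bot_le ?_
    intro e
    have h1 : pW.head = PrimeSpectrum.comap τ pS.head := LTSeries.head_map pS _ hτmono
    have h2 : x0 ∈ pW.head.asIdeal := by
      rw [h1]
      show τ x0 ∈ pS.head.asIdeal
      rw [hx0ker]
      exact pS.head.asIdeal.zero_mem
    rw [← e] at h2
    exact hx0ne ((Ideal.mem_bot).mp h2)
  let pW' : LTSeries (PrimeSpectrum W) := pW.cons ⟨⊥, Ideal.bot_prime⟩ hbotlt
  have hdim : ((pR.length + 1 : ℕ) : WithBot ℕ∞) ≤ ringKrullDim W := by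
    have h1 : (pW'.length : WithBot ℕ∞) ≤ ringKrullDim W := Order.LTSeries.length_le_krullDim pW'
    have h2 : pW'.length = pR.length + 1 := by
      have h3 : pW.length = pR.length := rfl
      simp only [pW', RelSeries.cons_length, h3]
    rwa [h2] at h1
  calc ((n + 1 : ℕ) : WithBot ℕ∞) ≤ ((pR.length + 1 : ℕ) : WithBot ℕ∞) := by
        exact_mod_cast Nat.succ_le_succ hnlen
  _ ≤ ringKrullDim W := hdim
  _ ≤ valuativeDim A := le_iSup_of_le ⟨q, hq⟩ (le_iSup_of_le W (le_iSup_of_le hWB le_rfl))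

/-- If every prime ideal of `A` containing `I` strictly contains some other prime ideal
of `A` (i.e. `V(I)` contains no minimal prime), then `dim_v (A/I) + 1 ≤ dim_v A`. -/
theorem valuativeDim_quotient_add_one_le {A : Type*} [CommRing A] (I : Ideal A)
    (h : ∀ p : Ideal A, p.IsPrime → I ≤ p → ∃ q : Ideal A, q.IsPrime ∧ q < p) :
    valuativeDim (A ⧸ I) + 1 ≤ valuativeDim A := by
  classical
  refine myaux_le_of_forall_nat_le (fun n hn => ?_)
  have hne : Nonempty (PrimeSpectrum (A ⧸ I)) := by
    by_contra hc
    rw [not_nonempty_iff] at hc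
    have hbot : valuativeDim (A ⧸ I) = ⊥ := by
      rw [valuativeDim]
      exact iSup_of_empty _
    rw [hbot, WithBot.bot_add] at hn
    simp at hn
  -- from a prime of A/I produce the data needed for `myaux_main`
  have key : ∀ (pbar : PrimeSpectrum (A ⧸ I)) (m : ℕ)
      (R : ValuationSubring (FractionRing ((A ⧸ I) ⧸ pbar.asIdeal)))
      (hR : Set.range (algebraMap ((A ⧸ I) ⧸ pbar.asIdeal) (FractionRing ((A ⧸ I) ⧸ pbar.asIdeal))) ⊆
        (R : Set (FractionRing ((A ⧸ I) ⧸ pbar.asIdeal))))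
      (hm : (m : WithBot ℕ∞) ≤ ringKrullDim R),
      ((m + 1 : ℕ) : WithBot ℕ∞) ≤ valuativeDim A := by
    intro pbar m R hR hm
    let π₂ : A →+* (A ⧸ I) ⧸ pbar.asIdeal :=
      (Ideal.Quotient.mk pbar.asIdeal).comp (Ideal.Quotient.mk I)
    have hsurj : Function.Surjective π₂ :=
      (Ideal.Quotient.mk_surjective).comp (Ideal.Quotient.mk_surjective)
    have hker : RingHom.ker π₂ = Ideal.comap (Ideal.Quotient.mk I) pbar.asIdeal := by
      ext a
      simp only [RingHom.mem_ker, Ideal.mem_comap, RingHom.comp_apply, π₂]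
      exact Ideal.Quotient.eq_zero_iff_mem
    haveI hp : (Ideal.comap (Ideal.Quotient.mk I) pbar.asIdeal).IsPrime := Ideal.IsPrime.comap _
    have hIle : I ≤ Ideal.comap (Ideal.Quotient.mk I) pbar.asIdeal := by
      intro a ha
      rw [Ideal.mem_comap]
      rw [Ideal.Quotient.eq_zero_iff_mem.mpr ha]
      exact pbar.asIdeal.zero_mem
    obtain ⟨qq, hqq, hqlt⟩ := h _ hp hIle
    exact myaux_main qq hqq π₂ hsurj (by rw [hker]; exact hqlt) R hR m hm
  cases n with
  | zero =>
    obtain ⟨pbar⟩ := hne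
    have h0 : ((0 : ℕ) : WithBot ℕ∞) ≤
        ringKrullDim (⊤ : ValuationSubring (FractionRing ((A ⧸ I) ⧸ pbar.asIdeal))) := by
      have : (0 : WithBot ℕ∞) ≤ ringKrullDim
          (⊤ : ValuationSubring (FractionRing ((A ⧸ I) ⧸ pbar.asIdeal))) :=
        Order.krullDim_nonneg
      exact_mod_cast this
    have h1 := key pbar 0 ⊤ (by intro x _; exact trivial) h0
    refine le_trans ?_ h1
    exact_mod_cast Nat.zero_le 1
  | succ m =>
    have hm : ((m : ℕ) : WithBot ℕ∞) ≤ valuativeDim (A ⧸ I) := myaux_add_one_cancel hn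
    rw [valuativeDim] at hm
    obtain ⟨pbar, h1⟩ := myaux_exists_of_nat_le_iSup _ m hm
    obtain ⟨R, h2⟩ := myaux_exists_of_nat_le_iSup _ m h1
    obtain ⟨hR, h3⟩ := myaux_exists_of_nat_le_iSup _ m h2
    exact key pbar m R hR h3
end

section
/- Let A → B be an injective integral ring homomorphism of commutative rings (so that Spec B → Spec A is a dominant integral morphism). Then dim_v(B) = dim_v(A). -/
open Polynomial


section Core

variable {K L : Type*} [Field K] [Field L]

/-- inclusion of the pullback valuation subring into `R`. -/
noncomputable def vsIncl (f : K →+* L) (R : ValuationSubring L) : (R.comap f) →+* R :=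
  (f.comp (R.comap f).subtype).codRestrict R.toSubring (fun x => x.2)

lemma vsIncl_apply (f : K →+* L) (R : ValuationSubring L) (x : R.comap f) :
    (vsIncl f R x : L) = f x := rfl

lemma vsIncl_injective (f : K →+* L) (R : ValuationSubring L) :
    Function.Injective (vsIncl f R) := by
  intro a b h
  have : f a = f b := congrArg Subtype.val h
  exact Subtype.ext (f.injective this)

lemma radical_isPrime_of_ne_top {R : Type*} [CommRing R] [IsDomain R] [ValuationRing R]
    {I : Ideal R} (h : I.radical ≠ ⊤) : I.radical.IsPrime := by
  refine ⟨h, fun {a b} hab => ?_⟩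
  rcases ValuationRing.dvd_total a b with ⟨c, rfl⟩ | ⟨c, rfl⟩
  · right
    have : (a * c) * (a * c) = (a * (a * c)) * c := by ring
    exact Ideal.mem_radical_of_pow_mem (m := 2) (by rw [pow_two, this]; exact I.radical.mul_mem_right _ hab)
  · left
    have : (b * c) * (b * c) = ((b * c) * b) * c := by ring
    exact Ideal.mem_radical_of_pow_mem (m := 2) (by rw [pow_two, this]; exact I.radical.mul_mem_right _ hab)

lemma exists_dvd_of_mem_map {V R : Type*} [CommRing V] [CommRing R] [IsDomain R] [ValuationRing R]
    (ι : V →+* R) {p : Ideal V} {y : R} (hy : y ∈ p.map ι) : ∃ a ∈ p, ι a ∣ y := by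
  rw [Ideal.map] at hy
  refine Submodule.span_induction ?_ ?_ ?_ ?_ hy
  · rintro x ⟨a, ha, rfl⟩
    exact ⟨a, ha, dvd_rfl⟩
  · exact ⟨0, p.zero_mem, by simp⟩
  · rintro x y - - ⟨a, ha, hax⟩ ⟨b, hb, hby⟩
    rcases ValuationRing.dvd_total (ι a) (ι b) with h | h
    · exact ⟨a, ha, dvd_add hax (h.trans hby)⟩
    · exact ⟨b, hb, dvd_add (h.trans hax) hby⟩
  · rintro r x - ⟨a, ha, hax⟩
    exact ⟨a, ha, (Dvd.dvd.mul_left hax r :)⟩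
lemma comap_radical_map (f : K →+* L) (R : ValuationSubring L)
    (p : Ideal (R.comap f)) [hp : p.IsPrime] :
    ((p.map (vsIncl f R)).radical).comap (vsIncl f R) = p := by
  refine le_antisymm ?_ (le_trans (Ideal.le_comap_map) (Ideal.comap_mono Ideal.le_radical))
  intro x hx
  rw [Ideal.mem_comap] at hx
  obtain ⟨n, hn⟩ := hx
  rw [← map_pow] at hn
  obtain ⟨a, ha, r, hr⟩ := exists_dvd_of_mem_map (vsIncl f R) hn
  by_cases ha0 : a = 0
  · subst ha0
    rw [map_zero, zero_mul] at hr
    have : (x : K) ^ n = 0 := by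
      have := congrArg Subtype.val hr
      rw [vsIncl_apply] at this
      simp only [ZeroMemClass.coe_zero] at this
      exact f.injective (by simpa using this)
    have hx0 : x = 0 := by
      ext
      exact (pow_eq_zero_iff'.mp this).1
    rw [hx0]; exact p.zero_mem
  · -- c = x^n / a lies in V
    have hval : f ((x : K) ^ n) = f (a : K) * (r : L) := by
      have := congrArg Subtype.val hr
      rwa [vsIncl_apply] at this
    have hfa' : (a : K) ≠ 0 := fun h => ha0 (by exact_mod_cast ZeroMemClass.coe_eq_zero.mp h)
    have hfa : f (a : K) ≠ 0 := fun h => ha0 (Subtype.ext (f.injective (by simpa using h)))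
    set c : K := (x : K) ^ n / (a : K) with hc
    have hcR : f c ∈ R := by
      have : f c = (r : L) := by
        rw [hc, map_div₀, hval]
        field_simp
      rw [this]; exact r.2
    have hxn : x ^ n = a * ⟨c, hcR⟩ := by
      apply Subtype.ext
      push_cast
      rw [hc]
      rw [mul_div_cancel₀ _ hfa']
    have : x ^ n ∈ p := hxn ▸ Ideal.mul_mem_right _ _ ha
    exact hp.mem_of_pow_mem n this



theorem krullDim_comap_le (f : K →+* L) (R : ValuationSubring L) :
    ringKrullDim (R.comap f) ≤ ringKrullDim R := by
  have key : ∀ p : PrimeSpectrum (R.comap f),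
      ((p.asIdeal.map (vsIncl f R)).radical).IsPrime := by
    intro p
    refine radical_isPrime_of_ne_top (fun htop => ?_)
    have := comap_radical_map f R p.asIdeal
    rw [htop, Ideal.comap_top] at this
    exact p.isPrime.ne_top this.symm
  let g : PrimeSpectrum (R.comap f) → PrimeSpectrum R :=
    fun p => ⟨(p.asIdeal.map (vsIncl f R)).radical, key p⟩
  have hinj : Function.Injective g := by
    intro p q h
    have h' : (p.asIdeal.map (vsIncl f R)).radical = (q.asIdeal.map (vsIncl f R)).radical :=
      congrArg PrimeSpectrum.asIdeal h
    have := comap_radical_map f R p.asIdeal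
    rw [h', comap_radical_map f R q.asIdeal] at this
    exact PrimeSpectrum.ext this.symm
  have hmono : Monotone g := fun p q hpq =>
    Ideal.radical_mono (Ideal.map_mono hpq)
  exact Order.krullDim_le_of_strictMono g (hmono.strictMono_of_injective hinj)


theorem exists_pow_val_eq [Algebra K L] [Algebra.IsAlgebraic K L] (R : ValuationSubring L)
    {x : L} (hx : x ≠ 0) :
    ∃ (n : ℕ) (a : K), 0 < n ∧ a ≠ 0 ∧
      R.valuation (x ^ n) = R.valuation (algebraMap K L a) := by
  obtain ⟨P, hP0, hPx⟩ := (Algebra.IsAlgebraic.isAlgebraic (R := K) x)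
  set v := R.valuation with hv
  set t : ℕ → L := fun i => algebraMap K L (P.coeff i) * x ^ i with ht
  have hsum : ∑ i ∈ P.support, t i = 0 := by
    have := hPx
    rw [Polynomial.aeval_def, Polynomial.eval₂_eq_sum, Polynomial.sum_def] at this
    exact this
  have htne : ∀ i ∈ P.support, t i ≠ 0 := by
    intro i hi
    have h1 : algebraMap K L (P.coeff i) ≠ 0 := by
      simpa using (fun h => Polynomial.mem_support_iff.mp hi ((algebraMap K L).injective (by simpa using h)))
    exact mul_ne_zero h1 (pow_ne_zero _ hx)
  have hne : P.support.Nonempty := Polynomial.support_nonempty.mpr hP0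
  obtain ⟨i₀, hi₀, hmax⟩ := P.support.exists_max_image (fun i => v (t i)) hne
  have h2 : ∃ j ∈ P.support, j ≠ i₀ ∧ v (t j) = v (t i₀) := by
    by_contra h
    push_neg at h
    have hlt : ∀ j ∈ P.support.erase i₀, v (t j) < v (t i₀) := fun j hj =>
      lt_of_le_of_ne (hmax _ (Finset.mem_of_mem_erase hj))
        (h _ (Finset.mem_of_mem_erase hj) (Finset.ne_of_mem_erase hj))
    have hv0 : v (t i₀) ≠ 0 := by
      simpa [hv, Valuation.zero_iff] using htne i₀ hi₀
    have hcon := Valuation.map_sum_lt v hv0 hlt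
    rw [Finset.sum_erase_eq_sub hi₀, hsum, zero_sub, Valuation.map_neg] at hcon
    exact lt_irrefl _ hcon
  obtain ⟨j, hj, hji, hvj⟩ := h2
  -- produce ordered pair m < n' in support with equal valuations
  obtain ⟨m, n', hmn, hm, hn, hveq⟩ :
      ∃ m n', m < n' ∧ m ∈ P.support ∧ n' ∈ P.support ∧ v (t m) = v (t n') := by
    rcases lt_or_gt_of_ne hji with h | h
    · exact ⟨j, i₀, h, hj, hi₀, hvj⟩
    · exact ⟨i₀, j, h, hi₀, hj, hvj.symm⟩
  have hxv : v x ≠ 0 := by simpa [hv, Valuation.zero_iff] using hx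
  have hcn : P.coeff n' ≠ 0 := Polynomial.mem_support_iff.mp hn
  refine ⟨n' - m, P.coeff m / P.coeff n', Nat.sub_pos_of_lt hmn, 
    div_ne_zero (Polynomial.mem_support_iff.mp hm) hcn, ?_⟩
  have key : v (algebraMap K L (P.coeff m)) = v (algebraMap K L (P.coeff n')) * (v x) ^ (n' - m) := by
    have expand : v (t m) = v (algebraMap K L (P.coeff m)) * (v x) ^ m := by
      rw [ht]; simp [map_mul, map_pow]
    have expand2 : v (t n') = v (algebraMap K L (P.coeff n')) * (v x) ^ n' := by
      rw [ht]; simp [map_mul, map_pow]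
    have : v (algebraMap K L (P.coeff m)) * (v x) ^ m
        = (v (algebraMap K L (P.coeff n')) * (v x) ^ (n' - m)) * (v x) ^ m := by
      rw [← expand, hveq, expand2, mul_assoc, ← pow_add, Nat.sub_add_cancel hmn.le]
    exact mul_right_cancel₀ (pow_ne_zero _ hxv) this
  have hbne : v (algebraMap K L (P.coeff n')) ≠ 0 := by
    simpa [Valuation.zero_iff] using (fun h => hcn ((algebraMap K L).injective (by simpa using h)))
  rw [map_pow, map_div₀, Valuation.map_div, key]
  rw [mul_comm, mul_div_assoc, div_self hbne, mul_one]


theorem krullDim_le_comap [Algebra K L] [Algebra.IsAlgebraic K L] (R : ValuationSubring L) :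
    ringKrullDim R ≤ ringKrullDim (R.comap (algebraMap K L)) := by
  set f := algebraMap K L with hf
  set ι := vsIncl f R with hι
  let g : PrimeSpectrum R → PrimeSpectrum (R.comap f) :=
    fun P => ⟨P.asIdeal.comap ι, P.asIdeal.comap_isPrime ι⟩
  have hmono : Monotone g := fun P Q h => Ideal.comap_mono h
  refine Order.krullDim_le_of_strictMono g ?_
  intro P Q hPQ
  refine lt_of_le_of_ne (hmono hPQ.le) (fun hEq => ?_)
  have hEq' : P.asIdeal.comap ι = Q.asIdeal.comap ι := congrArg PrimeSpectrum.asIdeal hEq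
  obtain ⟨x, hxQ, hxP⟩ := SetLike.exists_of_lt (show P.asIdeal < Q.asIdeal from hPQ)
  have hx0 : (x : L) ≠ 0 := by
    intro h
    exact hxP (by rw [show x = 0 from Subtype.ext h]; exact P.asIdeal.zero_mem)
  obtain ⟨n, a, hn, ha, hval⟩ := exists_pow_val_eq (K := K) R hx0
  set y : L := f a with hy
  have hy0 : y ≠ 0 := fun h => ha (f.injective (by simp only [map_zero]; exact h))
  have hxn0 : (x : L) ^ n ≠ 0 := pow_ne_zero _ hx0
  have hvxn : R.valuation ((x : L) ^ n) ≠ 0 := by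
    simpa [Valuation.zero_iff] using hxn0
  have hyR : y ∈ R := by
    rw [← R.valuation_le_one_iff, ← hval, map_pow]
    exact pow_le_one₀ zero_le' (R.valuation_le_one ⟨x, x.2⟩)
  have haV : a ∈ R.comap f := hyR
  -- the unit u = y / x^n
  set u : L := y / (x : L) ^ n with hu
  have hvu : R.valuation u = 1 := by
    have h1 : u * (x : L) ^ n = y := div_mul_cancel₀ _ hxn0
    have : R.valuation u * R.valuation ((x : L) ^ n) = 1 * R.valuation ((x : L) ^ n) := by
      rw [← Valuation.map_mul, h1, one_mul, hval]
    exact mul_right_cancel₀ hvxn this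
  have huR : u ∈ R := R.mem_of_valuation_le_one _ hvu.le
  have huinvR : u⁻¹ ∈ R := by
    refine R.mem_of_valuation_le_one _ ?_
    rw [map_inv₀, hvu, inv_one]
  have hyx : y = (x : L) ^ n * u := by rw [hu, mul_div_cancel₀ _ hxn0]
  have hyQ : (⟨y, hyR⟩ : R) ∈ Q.asIdeal := by
    have : (⟨y, hyR⟩ : R) = x ^ n * ⟨u, huR⟩ := Subtype.ext (by push_cast; exact hyx)
    rw [this]
    exact Ideal.mul_mem_right _ _ (Ideal.pow_mem_of_mem _ hxQ _ hn)
  have hyP : (⟨y, hyR⟩ : R) ∉ P.asIdeal := by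
    intro hmem
    have hxny : (x : L) ^ n = y * u⁻¹ := by
      rw [hyx, mul_assoc, mul_inv_cancel₀, mul_one]
      simpa [Valuation.zero_iff] using (hvu.trans_ne one_ne_zero)
    have : x ^ n = (⟨y, hyR⟩ : R) * ⟨u⁻¹, huinvR⟩ := Subtype.ext (by push_cast; exact hxny)
    exact hxP (P.isPrime.mem_of_pow_mem n (this ▸ Ideal.mul_mem_right _ _ hmem))
  have hιa : ι (⟨a, haV⟩ : R.comap f) = ⟨y, hyR⟩ := Subtype.ext rfl
  have : (⟨a, haV⟩ : R.comap f) ∈ Q.asIdeal.comap ι := by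
    rw [Ideal.mem_comap, hιa]; exact hyQ
  rw [← hEq'] at this
  rw [Ideal.mem_comap, hιa] at this
  exact hyP this

theorem ringKrullDim_comap_eq [Algebra K L] [Algebra.IsAlgebraic K L] (R : ValuationSubring L) :
    ringKrullDim (R.comap (algebraMap K L)) = ringKrullDim R :=
  le_antisymm (krullDim_comap_le _ R) (krullDim_le_comap R)


theorem exists_valuationSubring_extension [Algebra K L] (V : ValuationSubring K) :
    ∃ R : ValuationSubring L, R.comap (algebraMap K L) = V ∧
      ∀ x : L, ((algebraMap K L).comp V.subtype).IsIntegralElem x → x ∈ R := by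
  set φ : V →+* L := (algebraMap K L).comp V.subtype with hφ
  have hφinj : Function.Injective φ := by
    intro a b h
    exact Subtype.ext ((algebraMap K L).injective h)
  obtain ⟨R, hWR⟩ := (LocalSubring.range φ).exists_le_valuationSubring
  have hVR : ∀ v : V, φ v ∈ R := by
    intro v
    exact hWR.1 ⟨v, rfl⟩
  set T := R.comap (algebraMap K L) with hT
  have hVT : V.toSubring ≤ T.toSubring := fun a ha => hVR ⟨a, ha⟩
  have hdom : V.toLocalSubring ≤ T.toLocalSubring := by
    refine ⟨hVT, ⟨?_⟩⟩
    rintro a ha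
    obtain ⟨b, hb⟩ := isUnit_iff_exists_inv.mp ha
    have hval : (a : K) * (b : K) = 1 := congrArg Subtype.val hb
    have ha0 : (a : K) ≠ 0 := by
      rintro h0
      rw [h0, zero_mul] at hval
      exact zero_ne_one hval
    have hbinv : (b : K) = ((a : K))⁻¹ := eq_inv_of_mul_eq_one_right hval
    have hbR : algebraMap K L ((a : K))⁻¹ ∈ R := hbinv ▸ b.2
    have haR : IsUnit (⟨φ a, hVR a⟩ : R) := by
      refine isUnit_iff_exists_inv.mpr ⟨⟨algebraMap K L ((a : K))⁻¹, hbR⟩, Subtype.ext ?_⟩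
      show φ a * algebraMap K L ((a : K))⁻¹ = 1
      rw [show φ a = algebraMap K L (a : K) from rfl, ← map_mul, mul_inv_cancel₀ ha0, map_one]
    have hloc := hWR.2.1 (a := ⟨φ a, ⟨a, rfl⟩⟩)
    have hunit_range : IsUnit (⟨φ a, ⟨a, rfl⟩⟩ : (LocalSubring.range φ).toSubring) := hloc haR
    obtain ⟨c, hc⟩ := isUnit_iff_exists_inv.mp hunit_range
    obtain ⟨d, hd⟩ := c.2
    refine isUnit_iff_exists_inv.mpr ⟨d, ?_⟩
    apply hφinj
    have hval2 : φ a * (c : L) = 1 := congrArg Subtype.val hc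
    rw [show ((c : L)) = φ d from hd.symm] at hval2
    exact (map_mul φ a d).trans (hval2.trans (map_one φ).symm)
  have hTV : T = V := by
    apply ValuationSubring.toLocalSubring_injective
    exact le_antisymm (V.isMax_toLocalSubring hdom) hdom
  refine ⟨R, hTV, ?_⟩
  intro x hx
  obtain ⟨p, pm, pe⟩ := hx
  let j : V →+* R.toSubring := φ.codRestrict R.toSubring (fun v => hVR v)
  have hint : IsIntegral R.toSubring x := by
    refine ⟨p.map j, pm.map _, ?_⟩
    rw [Polynomial.eval₂_map]
    have hcomp : (algebraMap R.toSubring L).comp j = φ := RingHom.ext (fun v => rfl)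
    rw [hcomp]
    exact pe
  exact LocalSubring.mem_of_isMax_of_isIntegral R.isMax_toLocalSubring hint

end Core

section DomainAux

variable {A B : Type*} [CommRing A] [CommRing B] [IsDomain A] [IsDomain B]

lemma aux_le (g : A →+* B) (hginj : Function.Injective g) (hgint : g.IsIntegral)
    (R : ValuationSubring (FractionRing B))
    (hR : Set.range (algebraMap B (FractionRing B)) ⊆ (R : Set (FractionRing B))) :
    ∃ V : ValuationSubring (FractionRing A),
      Set.range (algebraMap A (FractionRing A)) ⊆ (V : Set (FractionRing A)) ∧
      ringKrullDim R ≤ ringKrullDim V := by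
  set K := FractionRing A
  set L := FractionRing B
  have hg' : Function.Injective ((algebraMap B L).comp g) := by
    rw [RingHom.coe_comp]
    exact (IsFractionRing.injective B L).comp hginj
  letI : Algebra K L := (IsFractionRing.lift (K := K) hg').toAlgebra
  have halgmap : ∀ a : A, algebraMap K L (algebraMap A K a) = algebraMap B L (g a) := by
    intro a
    exact (IsFractionRing.lift_algebraMap hg' a)
  have hcomp : (algebraMap K L).comp (algebraMap A K) = (algebraMap B L).comp g :=
    RingHom.ext halgmap
  have hint_img : ∀ b : B, (algebraMap K L).IsIntegralElem (algebraMap B L b) := by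
    intro b
    obtain ⟨p, pm, pe⟩ := hgint b
    refine ⟨p.map (algebraMap A K), pm.map _, ?_⟩
    rw [Polynomial.eval₂_map, hcomp, ← Polynomial.hom_eval₂, pe, map_zero]
  haveI : Algebra.IsAlgebraic K L := by
    refine ⟨fun x => ?_⟩
    obtain ⟨⟨b, s⟩, rfl⟩ := IsLocalization.mk'_surjective (nonZeroDivisors B) x
    dsimp only
    rw [IsFractionRing.mk'_eq_div]
    have h1 : IsAlgebraic K (algebraMap B L b) := (show IsIntegral K _ from hint_img b).isAlgebraic
    have h2 : IsAlgebraic K ((algebraMap B L (s : B))⁻¹) := (show IsIntegral K _ from hint_img (s : B)).isAlgebraic.inv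
    rw [div_eq_mul_inv]
    exact (isAlgebraic_iff_isIntegral.mp h1).mul (isAlgebraic_iff_isIntegral.mp h2)
      |>.isAlgebraic
  refine ⟨R.comap (algebraMap K L), ?_, ?_⟩
  · rintro _ ⟨a, rfl⟩
    show algebraMap K L (algebraMap A K a) ∈ R
    rw [halgmap a]
    exact hR ⟨g a, rfl⟩
  · rw [ringKrullDim_comap_eq]

lemma aux_ge (g : A →+* B) (hginj : Function.Injective g) (hgint : g.IsIntegral)
    (V : ValuationSubring (FractionRing A))
    (hV : Set.range (algebraMap A (FractionRing A)) ⊆ (V : Set (FractionRing A))) :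
    ∃ R : ValuationSubring (FractionRing B),
      Set.range (algebraMap B (FractionRing B)) ⊆ (R : Set (FractionRing B)) ∧
      ringKrullDim V ≤ ringKrullDim R := by
  set K := FractionRing A
  set L := FractionRing B
  have hg' : Function.Injective ((algebraMap B L).comp g) := by
    rw [RingHom.coe_comp]
    exact (IsFractionRing.injective B L).comp hginj
  letI : Algebra K L := (IsFractionRing.lift (K := K) hg').toAlgebra
  have halgmap : ∀ a : A, algebraMap K L (algebraMap A K a) = algebraMap B L (g a) := by
    intro a
    exact (IsFractionRing.lift_algebraMap hg' a)
  obtain ⟨R, hcomap, hmem⟩ := exists_valuationSubring_extension (L := L) V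
  refine ⟨R, ?_, ?_⟩
  · rintro _ ⟨b, rfl⟩
    apply hmem
    obtain ⟨p, pm, pe⟩ := hgint b
    let j : A →+* V := (algebraMap A K).codRestrict V.toSubring (fun a => hV ⟨a, rfl⟩)
    refine ⟨p.map j, pm.map _, ?_⟩
    rw [Polynomial.eval₂_map]
    have hcomp2 : ((algebraMap K L).comp V.subtype).comp j = (algebraMap B L).comp g :=
      RingHom.ext (fun a => halgmap a)
    rw [hcomp2, ← Polynomial.hom_eval₂, pe, map_zero]
  · rw [← hcomap]
    exact krullDim_comap_le (algebraMap K L) R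

end DomainAux

lemma quotientMap_isIntegral' {A B : Type*} [CommRing A] [CommRing B] {f : A →+* B}
    (hf : f.IsIntegral) {I : Ideal B} {J : Ideal A} (H : J ≤ I.comap f) :
    (Ideal.quotientMap I f H).IsIntegral := by
  intro x
  obtain ⟨b, rfl⟩ := Ideal.Quotient.mk_surjective x
  obtain ⟨p, pm, pe⟩ := hf b
  refine ⟨p.map (Ideal.Quotient.mk J), pm.map _, ?_⟩
  rw [Polynomial.eval₂_map, Ideal.quotientMap_comp_mk H,
    show (Ideal.Quotient.mk I) b = ((Ideal.Quotient.mk I)) b from rfl,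
    ← Polynomial.hom_eval₂, pe, map_zero]



/-- If `f : A → B` is an injective integral ring homomorphism (so that
`Spec B → Spec A` is a dominant integral morphism), then `dim_v B = dim_v A`. -/
theorem valuativeDim_eq_of_injective_isIntegral {A B : Type*} [CommRing A] [CommRing B]
    (f : A →+* B) (hinj : Function.Injective f) (hint : f.IsIntegral) :
    valuativeDim B = valuativeDim A := by

  apply le_antisymm
  · unfold valuativeDim
    refine iSup_le fun q => iSup_le fun R => iSup_le fun hR => ?_
    set p : PrimeSpectrum A := ⟨q.asIdeal.comap f, q.isPrime.comap f⟩ with hp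
    haveI : p.asIdeal.IsPrime := p.isPrime
    set g : A ⧸ p.asIdeal →+* B ⧸ q.asIdeal := Ideal.quotientMap q.asIdeal f le_rfl with hg
    have hginj : Function.Injective g := Ideal.quotientMap_injective' le_rfl
    have hgint : g.IsIntegral := quotientMap_isIntegral' hint le_rfl
    obtain ⟨V, hV, hdim⟩ := aux_le g hginj hgint R hR
    exact le_trans hdim (le_iSup_of_le p (le_iSup_of_le V (le_iSup_of_le hV le_rfl)))
  · unfold valuativeDim
    refine iSup_le fun p => iSup_le fun V => iSup_le fun hV => ?_
    letI : Algebra A B := f.toAlgebra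
    haveI : Algebra.IsIntegral A B := ⟨hint⟩
    obtain ⟨Q, -, hQprime, hQcomap⟩ :=
      Ideal.exists_ideal_over_prime_of_isIntegral p.asIdeal (⊥ : Ideal B) (by
        intro x hx
        rw [Ideal.mem_comap, Ideal.mem_bot] at hx
        have : x = 0 := hinj (by rw [map_zero]; exact hx)
        rw [this]; exact p.asIdeal.zero_mem)
    set q : PrimeSpectrum B := ⟨Q, hQprime⟩ with hq
    have hQcomap' : Ideal.comap f Q = p.asIdeal := hQcomap
    set g : A ⧸ p.asIdeal →+* B ⧸ q.asIdeal := Ideal.quotientMap Q f hQcomap'.ge with hg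
    have hginj : Function.Injective g := Ideal.quotientMap_injective' hQcomap'.le
    have hgint : g.IsIntegral := quotientMap_isIntegral' hint hQcomap'.ge
    obtain ⟨R, hRr, hdim⟩ := aux_ge g hginj hgint V hV
    exact le_trans hdim (le_iSup_of_le q (le_iSup_of_le R (le_iSup_of_le hRr le_rfl)))
end

section
/- Let {X_i} be a cofiltered diagram in the category of topological spaces with limit X. Then the Krull dimension of X is at most the supremum over i of the Krull dimensions of the X_i: dim(X) ≤ sup_i dim(X_i). -/
open CategoryTheory CategoryTheory.Limits
open TopologicalSpace

universe u

/-- If `{X_i}` is a cofiltered diagram of topological spaces with limit `X`, then the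
Krull dimension of `X` is at most the supremum of the Krull dimensions of the `X_i`. -/
theorem topologicalKrullDim_limit_le {J : Type u} [SmallCategory J] [IsCofiltered J]
    (F : J ⥤ TopCat.{u}) :
    topologicalKrullDim (limit F : TopCat.{u}) ≤ ⨆ j : J, topologicalKrullDim (F.obj j) := by
  classical
  rw [topologicalKrullDim, Order.krullDim]
  apply iSup_le
  intro p
  set n := p.length with hn
  have hbasis : IsTopologicalBasis
      {U : Set (limit F : TopCat.{u}) | ∃ (j : J) (V : Set (F.obj j)), IsOpen V ∧
        U = (limit.π F j) ⁻¹' V} :=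
    TopCat.isTopologicalBasis_cofiltered_limit F (limit.cone F) (limit.isLimit F)
      (fun j => {U | IsOpen U}) (fun j => isTopologicalBasis_opens)
      (fun i => isOpen_univ) (fun i U1 U2 h1 h2 => h1.inter h2)
      (fun i j f V hV => hV.preimage (F.map f).hom.continuous)
  have key : ∀ k : Fin n, ∃ (x : (limit F : TopCat.{u})) (j : J) (V : Set (F.obj j)),
      IsOpen V ∧ x ∈ (p k.succ).carrier ∧ x ∈ (limit.π F j) ⁻¹' V ∧
      (limit.π F j) ⁻¹' V ⊆ ((p k.castSucc).carrier)ᶜ := by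
    intro k
    have hlt := p.step k
    obtain ⟨x, hx1, hx2⟩ : ∃ x, x ∈ (p k.succ).carrier ∧ x ∉ (p k.castSucc).carrier := by
      by_contra h
      push_neg at h
      exact hlt.ne (le_antisymm hlt.le (show p k.succ ≤ p k.castSucc from fun x hx => h x hx))
    have hopen : IsOpen ((p k.castSucc).carrier)ᶜ := (p k.castSucc).isClosed'.isOpen_compl
    obtain ⟨U, hU, hxU, hUsub⟩ := hbasis.exists_subset_of_mem_open hx2 hopen
    obtain ⟨j, V, hV, rfl⟩ := hU
    exact ⟨x, j, V, hV, hx1, hxU, hUsub⟩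
  choose x jj V hVopen hx1 hx2 hVsub using key
  obtain ⟨S, hS⟩ := IsCofiltered.inf_objs_exists (Finset.image jj Finset.univ)
  have f : ∀ k : Fin n, S ⟶ jj k := fun k =>
    (hS (Finset.mem_image_of_mem jj (Finset.mem_univ k))).some
  let W : Fin (n + 1) → Set (F.obj S) := fun k => closure ((limit.π F S) '' (p k).carrier)
  have hWirr : ∀ k, IsIrreducible (W k) := fun k =>
    ((p k).isIrreducible'.image _ (limit.π F S).hom.continuous.continuousOn).closure
  have hπ : ∀ (k : Fin n) (z : (limit F : TopCat.{u})),
      (limit.π F (jj k)) z = (F.map (f k)) ((limit.π F S) z) := by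
    intro k z
    rw [← limit.w F (f k)]
    rfl
  have hmono : ∀ k : Fin n, W k.castSucc ⊂ W k.succ := by
    intro k
    constructor
    · exact closure_mono (Set.image_mono (le_of_lt (p.step k)))
    · intro hsub
      have hmem : (limit.π F S) (x k) ∈ W k.castSucc :=
        hsub (subset_closure ⟨x k, hx1 k, rfl⟩)
      have hd : W k.castSucc ⊆ ((F.map (f k)) ⁻¹' V k)ᶜ := by
        apply closure_minimal
        · rintro _ ⟨z, hz, rfl⟩ hmem2
          refine hVsub k ?_ hz
          rw [Set.mem_preimage, hπ k z]
          exact hmem2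
        · exact ((hVopen k).preimage (F.map (f k)).hom.continuous).isClosed_compl
      refine hd hmem ?_
      rw [Set.mem_preimage, ← hπ k (x k)]
      exact hx2 k
  let q : LTSeries (IrreducibleCloseds (F.obj S)) :=
    ⟨n, fun k => ⟨W k, hWirr k, isClosed_closure⟩, fun k => hmono k⟩
  calc (n : WithBot ℕ∞) = q.length := rfl
    _ ≤ Order.krullDim (IrreducibleCloseds (F.obj S)) := Order.LTSeries.length_le_krullDim q
    _ = topologicalKrullDim (F.obj S) := rfl
    _ ≤ ⨆ j : J, topologicalKrullDim (F.obj j) := le_iSup (fun j : J => topologicalKrullDim (F.obj j)) S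
end

section
/- Let V be a henselian valuation ring and 𝔭 ⊂ V a prime ideal. Then the quotient V/𝔭 and the localization V_𝔭 are both henselian valuation rings. -/
open Polynomial IsLocalRing

section Helpers

variable {V : Type*} [CommRing V] [IsDomain V] [ValuationRing V]
variable (p : Ideal V) [p.IsPrime]

lemma my_quot_valuation : ValuationRing (V ⧸ p) := by
  have hpre : PreValuationRing (V ⧸ p) := by
    refine ⟨fun a b => ?_⟩
    obtain ⟨a, rfl⟩ := Ideal.Quotient.mk_surjective a
    obtain ⟨b, rfl⟩ := Ideal.Quotient.mk_surjective b
    obtain ⟨c, hc | hc⟩ := ValuationRing.cond a b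
    · exact ⟨Ideal.Quotient.mk p c, Or.inl (by rw [← map_mul, hc])⟩
    · exact ⟨Ideal.Quotient.mk p c, Or.inr (by rw [← map_mul, hc])⟩
  exact @ValuationRing.mk _ _ _ hpre

lemma my_quot_nonunit' {W : Type*} [CommRing W] [IsLocalRing W] (q : Ideal W) (hq : q ≠ ⊤)
    {x : W} (hx : x ∈ maximalIdeal W) : ¬ IsUnit (Ideal.Quotient.mk q x) := by
  intro h
  obtain ⟨b, hb⟩ := isUnit_iff_exists_inv.mp h
  obtain ⟨y, rfl⟩ := Ideal.Quotient.mk_surjective b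
  rw [← map_mul, ← map_one (Ideal.Quotient.mk q), Ideal.Quotient.mk_eq_mk_iff_sub_mem] at hb
  have h1 : (1 : W) ∈ maximalIdeal W := by
    have := sub_mem ((maximalIdeal W).mul_mem_right y hx) (le_maximalIdeal hq hb)
    simp only [sub_sub_cancel] at this
    exact this
  exact (mem_nonunits_iff.mp h1) isUnit_one

lemma my_quot_henselian [HenselianLocalRing V] : HenselianLocalRing (V ⧸ p) := by
  haveI : Nontrivial (V ⧸ p) := Ideal.Quotient.nontrivial_iff.mpr ‹p.IsPrime›.ne_top
  haveI hloc : IsLocalRing (V ⧸ p) :=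
    IsLocalRing.of_surjective' (Ideal.Quotient.mk p) Ideal.Quotient.mk_surjective
  refine ⟨fun f hf a₀ h₁ h₂ => ?_⟩
  -- lift f to a monic polynomial over V
  have hfl : f ∈ Polynomial.lifts (Ideal.Quotient.mk p) := by
    obtain ⟨F, hF⟩ := Polynomial.map_surjective _ Ideal.Quotient.mk_surjective f
    exact (Polynomial.mem_lifts _).mpr ⟨F, hF⟩
  obtain ⟨F, hFmap, -, hFmonic⟩ := Polynomial.lifts_and_degree_eq_and_monic hfl hf
  obtain ⟨b₀, rfl⟩ := Ideal.Quotient.mk_surjective a₀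
  have heval : ∀ (G : V[X]) (x : V), (G.map (Ideal.Quotient.mk p)).eval (Ideal.Quotient.mk p x)
      = Ideal.Quotient.mk p (G.eval x) := fun G x => by
    rw [Polynomial.eval_map, Polynomial.eval₂_at_apply]
  have hFb₀ : F.eval b₀ ∈ maximalIdeal V := by
    rw [mem_maximalIdeal, mem_nonunits_iff]
    intro hu
    have : IsUnit (f.eval (Ideal.Quotient.mk p b₀)) := by
      rw [← hFmap, heval]; exact hu.map _

    exact mem_nonunits_iff.mp ((mem_maximalIdeal _).mp h₁) this
  have hF'b₀ : IsUnit (F.derivative.eval b₀) := by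
    by_contra hu
    have hmem : F.derivative.eval b₀ ∈ maximalIdeal V := (mem_maximalIdeal _).mpr hu
    have : ¬ IsUnit (f.derivative.eval (Ideal.Quotient.mk p b₀)) := by
      rw [← hFmap, Polynomial.derivative_map, heval]
      exact my_quot_nonunit' p ‹p.IsPrime›.ne_top hmem
    exact this h₂
  obtain ⟨a, haroot, ha⟩ := HenselianLocalRing.is_henselian F hFmonic b₀ hFb₀ hF'b₀
  refine ⟨Ideal.Quotient.mk p a, ?_, ?_⟩
  · show f.eval _ = 0
    rw [← hFmap, heval, haroot.eq_zero, map_zero]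
  · rw [← map_sub]
    exact (mem_maximalIdeal _).mpr
      (mem_nonunits_iff.mpr (my_quot_nonunit' p ‹p.IsPrime›.ne_top ha))

lemma my_loc_valuation : ValuationRing (Localization.AtPrime p) := by
  have hpre : PreValuationRing (Localization.AtPrime p) := by
    refine ⟨fun x y => ?_⟩
    obtain ⟨⟨a, s⟩, rfl⟩ := IsLocalization.mk'_surjective p.primeCompl x
    obtain ⟨⟨b, t⟩, rfl⟩ := IsLocalization.mk'_surjective p.primeCompl y
    have h1 := IsLocalization.mk'_spec (Localization.AtPrime p) a s
    have h2 := IsLocalization.mk'_spec (Localization.AtPrime p) b t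
    have hst : IsUnit (algebraMap V (Localization.AtPrime p) (s * t : V)) :=
      IsLocalization.map_units _ (s * t)
    obtain ⟨c, hc | hc⟩ := ValuationRing.cond (a * (t : V)) (b * (s : V))
    · refine ⟨algebraMap V (Localization.AtPrime p) c, Or.inl ?_⟩
      apply hst.mul_left_cancel
      rw [map_mul]
      calc algebraMap V _ (s : V) * algebraMap V _ (t : V)
            * (IsLocalization.mk' _ a s * algebraMap V _ c)
          = (IsLocalization.mk' (Localization.AtPrime p) a s * algebraMap V _ (s : V))
            * (algebraMap V _ (t : V) * algebraMap V _ c) := by ring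
        _ = algebraMap V _ (a * (t : V) * c) := by rw [h1, map_mul, map_mul]; ring
        _ = algebraMap V _ (b * (s : V)) := by rw [hc]
        _ = algebraMap V _ (s : V) * algebraMap V _ (t : V)
            * IsLocalization.mk' (Localization.AtPrime p) b t := by
            rw [map_mul]; linear_combination (-(algebraMap V (Localization.AtPrime p) (s : V))) * h2
    · refine ⟨algebraMap V (Localization.AtPrime p) c, Or.inr ?_⟩
      apply hst.mul_left_cancel
      rw [map_mul]
      calc algebraMap V _ (s : V) * algebraMap V _ (t : V)
            * (IsLocalization.mk' _ b t * algebraMap V _ c)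
          = (IsLocalization.mk' (Localization.AtPrime p) b t * algebraMap V _ (t : V))
            * (algebraMap V _ (s : V) * algebraMap V _ c) := by ring
        _ = algebraMap V _ (b * (s : V) * c) := by rw [h2, map_mul, map_mul]; ring
        _ = algebraMap V _ (a * (t : V)) := by rw [hc]
        _ = algebraMap V _ (s : V) * algebraMap V _ (t : V)
            * IsLocalization.mk' (Localization.AtPrime p) a s := by
            rw [map_mul]; linear_combination (-(algebraMap V (Localization.AtPrime p) (t : V))) * h1
  exact @ValuationRing.mk _ _ _ hpre

lemma my_mem_maxIdeal_loc {x : Localization.AtPrime p}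
    (hx : x ∈ maximalIdeal (Localization.AtPrime p)) :
    ∃ b ∈ p, algebraMap V (Localization.AtPrime p) b = x := by
  rw [← Localization.AtPrime.map_eq_maximalIdeal,
    IsLocalization.mem_map_algebraMap_iff p.primeCompl] at hx
  obtain ⟨⟨⟨a, ha⟩, s⟩, hxs⟩ := hx
  simp only at hxs
  obtain ⟨c, hc | hc⟩ := ValuationRing.cond (s : V) a
  · refine ⟨c, ?_, ?_⟩
    · rcases ‹p.IsPrime›.mem_or_mem (hc ▸ ha) with h | h
      · exact absurd h s.2
      · exact h
    · have hu : IsUnit (algebraMap V (Localization.AtPrime p) (s : V)) :=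
        IsLocalization.map_units _ s
      apply hu.mul_left_cancel
      rw [← map_mul, hc, ← hxs, mul_comm]
  · exact absurd (hc ▸ p.mul_mem_right c ha) s.2

lemma my_loc_henselian [HenselianLocalRing V] :
    HenselianLocalRing (Localization.AtPrime p) := by
  set R := Localization.AtPrime p with hR
  let φ : V →+* R := algebraMap V R
  refine ⟨fun f hf a₀ h₁ h₂ => ?_⟩
  -- degree at least 1
  have hn : f.natDegree ≠ 0 := by
    intro h0
    rw [Polynomial.Monic.natDegree_eq_zero hf] at h0
    rw [h0, Polynomial.eval_one] at h₁
    exact (mem_nonunits_iff.mp ((mem_maximalIdeal _).mp h₁)) isUnit_one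
  obtain ⟨m, hm⟩ : ∃ m, f.natDegree = m + 1 :=
    ⟨f.natDegree - 1, (Nat.succ_pred_eq_of_pos (Nat.pos_of_ne_zero hn)).symm⟩
  set E : Rˣ := h₂.unit with hE
  have hEval : (E : R) = f.derivative.eval a₀ := h₂.unit_spec
  set t : ℕ → R := fun k => (Polynomial.taylor a₀ f).coeff k with ht
  set c : R := -(((E⁻¹ : Rˣ) : R) ^ 2 * f.eval a₀) with hcdef
  have hc : c ∈ maximalIdeal R := neg_mem (Ideal.mul_mem_left _ _ h₁)
  have ht0 : t 0 = -((E : R) ^ 2 * c) := by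
    rw [ht]
    simp only [Polynomial.taylor_coeff_zero]
    rw [hcdef]
    have hu : (E : R) * ((E⁻¹ : Rˣ) : R) = 1 := E.mul_inv
    calc f.eval a₀ = ((E : R) * ((E⁻¹ : Rˣ) : R)) ^ 2 * f.eval a₀ := by rw [hu]; ring
      _ = -((E : R) ^ 2 * -(((E⁻¹ : Rˣ) : R) ^ 2 * f.eval a₀)) := by ring
  have ht1 : t 1 = (E : R) := by
    rw [ht]; simp only [Polynomial.taylor_coeff_one]; rw [hEval]
  -- choose coefficients in V
  have hbex : ∀ k, k < m → ∃ b ∈ p, φ b = t (k + 2) * (E : R) ^ k * c ^ (k + 1) := by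
    intro k _
    apply my_mem_maxIdeal_loc
    have : t (k + 2) * (E : R) ^ k * c ^ (k + 1)
        = t (k + 2) * (E : R) ^ k * c ^ k * c := by ring
    rw [this]
    exact Ideal.mul_mem_left _ _ hc
  choose! b hbp hbφ using hbex
  set Q : V[X] := X ^ m + ∑ k ∈ Finset.range m, Polynomial.C (b k) * X ^ (m - 1 - k) with hQ
  set F : V[X] := X ^ (m + 1) - Q with hF
  have hQdeg : Q.degree < (m + 1 : ℕ) := by
    apply lt_of_le_of_lt (Polynomial.degree_add_le _ _)
    rw [max_lt_iff]
    constructor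
    · rw [Polynomial.degree_X_pow]
      exact_mod_cast Nat.lt_succ_self m
    · apply lt_of_le_of_lt (Polynomial.degree_sum_le _ _)
      rw [Finset.sup_lt_iff (by exact_mod_cast WithBot.bot_lt_coe (m + 1))]
      intro k hk
      apply lt_of_le_of_lt (Polynomial.degree_C_mul_X_pow_le _ _)
      exact_mod_cast Nat.lt_succ_of_le (Nat.sub_le _ _ |>.trans (Nat.sub_le _ _))
  have hFmonic : F.Monic := Polynomial.monic_X_pow_sub hQdeg
  have hFeval : ∀ x : V, F.eval x
      = x ^ (m + 1) - (x ^ m + ∑ k ∈ Finset.range m, b k * x ^ (m - 1 - k)) := by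
    intro x
    rw [hF, hQ]
    simp [Polynomial.eval_finset_sum]
  have hF1 : F.eval 1 ∈ maximalIdeal V := by
    rw [hFeval]
    simp only [one_pow, mul_one]
    have : (1 : V) - (1 + ∑ k ∈ Finset.range m, b k) = -∑ k ∈ Finset.range m, b k := by ring
    rw [this]
    exact neg_mem (Ideal.sum_mem _ fun k hk =>
      le_maximalIdeal ‹p.IsPrime›.ne_top (hbp k (Finset.mem_range.mp hk)))
  have hF'1 : IsUnit (F.derivative.eval 1) := by
    have hd : F.derivative.eval 1
        = 1 - ∑ k ∈ Finset.range m, b k * (m - 1 - k : ℕ) := by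
      rw [hF, hQ]
      simp only [Polynomial.derivative_sub, Polynomial.derivative_add,
        Polynomial.derivative_X_pow, Polynomial.derivative_sum, Polynomial.derivative_C_mul,
        Polynomial.eval_sub, Polynomial.eval_add, Polynomial.eval_mul, Polynomial.eval_pow,
        Polynomial.eval_C, Polynomial.eval_natCast, Polynomial.eval_finset_sum, one_pow, mul_one,
        Polynomial.eval_X]
      push_cast
      ring
    rw [hd]
    apply isUnit_one_sub_self_of_mem_nonunits
    rw [← mem_maximalIdeal]
    exact Ideal.sum_mem _ fun k hk => Ideal.mul_mem_right _ _
      (le_maximalIdeal ‹p.IsPrime›.ne_top (hbp k (Finset.mem_range.mp hk)))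
  obtain ⟨x, hxroot, hx1⟩ := HenselianLocalRing.is_henselian F hFmonic 1 hF1 hF'1
  have hxu : IsUnit x := by
    have hx : x = 1 - (1 - x) := by ring
    rw [hx]
    apply isUnit_one_sub_self_of_mem_nonunits
    rw [← mem_maximalIdeal]
    have := neg_mem hx1
    rwa [neg_sub] at this
  have hyu : IsUnit (φ x) := hxu.map φ
  set Y : Rˣ := hyu.unit with hY
  have hYval : (Y : R) = φ x := hyu.unit_spec
  set d : R := (E : R) * c * ((Y⁻¹ : Rˣ) : R) with hd
  have hdm : d ∈ maximalIdeal R :=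
    Ideal.mul_mem_right _ _ (Ideal.mul_mem_left _ _ hc)
  -- key identity
  have key : (Polynomial.taylor a₀ f).eval d * (Y : R) ^ (m + 1)
      = -((E : R) ^ 2 * c * φ (F.eval x)) := by
    have hsum : (Polynomial.taylor a₀ f).eval d = ∑ k ∈ Finset.range (m + 2), t k * d ^ k := by
      rw [Polynomial.eval_eq_sum_range, Polynomial.natDegree_taylor, hm]
    have hterm : ∀ k ∈ Finset.range (m + 2),
        t k * d ^ k * (Y : R) ^ (m + 1)
          = t k * (E : R) ^ k * c ^ k * (Y : R) ^ (m + 1 - k) := by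
      intro k hk
      have hk' : k ≤ m + 1 := Nat.lt_succ_iff.mp (Finset.mem_range.mp hk)
      have h1 : (Y : R) ^ (m + 1) = (Y : R) ^ k * (Y : R) ^ (m + 1 - k) := by
        rw [← pow_add]
        congr 1
        omega
      have h2 : ((Y⁻¹ : Rˣ) : R) ^ k * (Y : R) ^ k = 1 := by
        rw [← mul_pow, Units.inv_mul, one_pow]
      calc t k * d ^ k * (Y : R) ^ (m + 1)
          = t k * ((E : R) * c) ^ k * (((Y⁻¹ : Rˣ) : R) ^ k * (Y : R) ^ k)
            * (Y : R) ^ (m + 1 - k) := by rw [hd, h1]; ring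
        _ = t k * (E : R) ^ k * c ^ k * (Y : R) ^ (m + 1 - k) := by rw [h2]; ring
    have hφF : φ (F.eval x) = (Y : R) ^ (m + 1)
        - ((Y : R) ^ m + ∑ k ∈ Finset.range m, φ (b k) * (Y : R) ^ (m - 1 - k)) := by
      rw [hFeval]
      simp only [map_sub, map_add, map_pow, map_sum, map_mul, hYval]
    have hk2 : ∀ i ∈ Finset.range m,
        t (i + 1 + 1) * (E : R) ^ (i + 1 + 1) * c ^ (i + 1 + 1) * (Y : R) ^ (m + 1 - (i + 1 + 1))
          = (E : R) ^ 2 * c * (φ (b i) * (Y : R) ^ (m - 1 - i)) := by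
      intro i hi
      rw [hbφ i (Finset.mem_range.mp hi)]
      have hsub : m + 1 - (i + 1 + 1) = m - 1 - i := by omega
      rw [hsub]
      ring
    calc (Polynomial.taylor a₀ f).eval d * (Y : R) ^ (m + 1)
        = ∑ k ∈ Finset.range (m + 2), t k * d ^ k * (Y : R) ^ (m + 1) := by
          rw [hsum, Finset.sum_mul]
      _ = ∑ k ∈ Finset.range (m + 2), t k * (E : R) ^ k * c ^ k * (Y : R) ^ (m + 1 - k) :=
          Finset.sum_congr rfl hterm
      _ = (∑ i ∈ Finset.range m,
            t (i + 1 + 1) * (E : R) ^ (i + 1 + 1) * c ^ (i + 1 + 1)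
              * (Y : R) ^ (m + 1 - (i + 1 + 1)))
          + t (0 + 1) * (E : R) ^ (0 + 1) * c ^ (0 + 1) * (Y : R) ^ (m + 1 - (0 + 1))
          + t 0 * (E : R) ^ 0 * c ^ 0 * (Y : R) ^ (m + 1 - 0) := by
          rw [Finset.sum_range_succ', Finset.sum_range_succ']
      _ = (∑ i ∈ Finset.range m, (E : R) ^ 2 * c * (φ (b i) * (Y : R) ^ (m - 1 - i)))
          + t 1 * (E : R) ^ 1 * c ^ 1 * (Y : R) ^ m
          + t 0 * (E : R) ^ 0 * c ^ 0 * (Y : R) ^ (m + 1) := by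
          rw [Finset.sum_congr rfl hk2]
          norm_num
      _ = -((E : R) ^ 2 * c * φ (F.eval x)) := by
          rw [hφF, ht0, ht1, ← Finset.mul_sum]
          ring
  have hroot : (Polynomial.taylor a₀ f).eval d = 0 := by
    have hz : φ (F.eval x) = 0 := by rw [hxroot.eq_zero, map_zero]
    rw [hz, mul_zero, neg_zero] at key
    have hyn : (Y : R) ^ (m + 1) ≠ 0 := pow_ne_zero _ (Y.ne_zero)
    exact (mul_eq_zero.mp key).resolve_right hyn
  refine ⟨a₀ + d, ?_, ?_⟩
  · show f.eval (a₀ + d) = 0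
    rw [add_comm, ← Polynomial.taylor_eval]
    exact hroot
  · simpa using hdm

end Helpers

/-- Let `V` be a henselian valuation ring and `𝔭 ⊂ V` a prime ideal. Then the quotient
`V/𝔭` and the localization `V_𝔭` are both henselian valuation rings. -/
theorem quotient_and_localization_henselian_valuationRing
    {V : Type*} [CommRing V] [IsDomain V] [ValuationRing V] [HenselianLocalRing V]
    (p : Ideal V) [p.IsPrime] :
    (ValuationRing (V ⧸ p) ∧ HenselianLocalRing (V ⧸ p)) ∧
    (ValuationRing (Localization.AtPrime p) ∧
      HenselianLocalRing (Localization.AtPrime p)) := by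
  exact ⟨⟨my_quot_valuation p, my_quot_henselian p⟩,
    ⟨my_loc_valuation p, my_loc_henselian p⟩⟩
end

section
/- Let V be a valuation ring and 𝔭 ⊂ V a prime ideal. Then the commutative square of ring homomorphisms V → V_𝔭, V → V/𝔭, V_𝔭 → κ(𝔭), V/𝔭 → κ(𝔭) is cartesian; that is, the natural map V → V_𝔭 ×_{κ(𝔭)} V/𝔭 is an isomorphism, where κ(𝔭) = V_𝔭/𝔭V_𝔭 is the residue field of V at 𝔭. -/
/-- The canonical map `V/𝔭 → κ(𝔭)` from the quotient to the residue field
`κ(𝔭) = V_𝔭 / 𝔭V_𝔭` of `V` at a prime `𝔭`. -/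
noncomputable def quotientToResidueField {V : Type*} [CommRing V] (p : Ideal V)
    [p.IsPrime] :
    V ⧸ p →+* IsLocalRing.ResidueField (Localization.AtPrime p) :=
  Ideal.Quotient.lift p
    ((IsLocalRing.residue (Localization.AtPrime p)).comp
      (algebraMap V (Localization.AtPrime p)))
    (fun a ha => by
      have h : algebraMap V (Localization.AtPrime p) a ∈
          IsLocalRing.maximalIdeal (Localization.AtPrime p) :=
        (IsLocalization.AtPrime.to_map_mem_maximal_iff _ p a).mpr ha
      exact Ideal.Quotient.eq_zero_iff_mem.mpr h)

/-- Let `V` be a valuation ring and `𝔭 ⊂ V` a prime ideal. Then the square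
`V → V_𝔭`, `V → V/𝔭`, `V_𝔭 → κ(𝔭)`, `V/𝔭 → κ(𝔭)` is cartesian: the natural map
`V → V_𝔭 ×_{κ(𝔭)} V/𝔭` is an isomorphism (i.e. `x ↦ (x, x̄)` is injective, and every
compatible pair `(a, b)` lifts to some `x ∈ V`). -/
theorem valuationRing_milnor_square_cartesian
    {V : Type*} [CommRing V] [IsDomain V] [ValuationRing V] (p : Ideal V) [p.IsPrime] :
    (Function.Injective fun x : V =>
      (algebraMap V (Localization.AtPrime p) x, Ideal.Quotient.mk p x)) ∧
    ∀ (a : Localization.AtPrime p) (b : V ⧸ p),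
      IsLocalRing.residue (Localization.AtPrime p) a = quotientToResidueField p b →
      ∃ x : V, algebraMap V (Localization.AtPrime p) x = a ∧ Ideal.Quotient.mk p x = b := by
  constructor
  · intro x y h
    exact IsLocalization.injective (Localization.AtPrime p)
      p.primeCompl_le_nonZeroDivisors (congrArg Prod.fst h)
  · intro a b hab
    obtain ⟨c, rfl⟩ := Ideal.Quotient.mk_surjective b
    have hres : IsLocalRing.residue (Localization.AtPrime p)
        (a - algebraMap V (Localization.AtPrime p) c) = 0 := by
      rw [map_sub, sub_eq_zero, hab]; rfl
    have hm0 : a - algebraMap V (Localization.AtPrime p) c ∈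
        IsLocalRing.maximalIdeal (Localization.AtPrime p) :=
      Ideal.Quotient.eq_zero_iff_mem.mp hres
    have hm := hm0
    rw [← Localization.AtPrime.map_eq_maximalIdeal] at hm
    obtain ⟨⟨⟨s, hs⟩, ⟨t, ht⟩⟩, heq⟩ :=
      (IsLocalization.mem_map_algebraMap_iff p.primeCompl (Localization.AtPrime p)).mp hm
    simp only at heq
    -- heq : (a - algebraMap c) * algebraMap t = algebraMap s
    have htunit : IsUnit (algebraMap V (Localization.AtPrime p) t) :=
      IsLocalization.map_units (Localization.AtPrime p) (⟨t, ht⟩ : p.primeCompl)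
    have key : ∃ u ∈ p, algebraMap V (Localization.AtPrime p) u
        = a - algebraMap V (Localization.AtPrime p) c := by
      obtain ⟨w, hw | hw⟩ := ValuationRing.cond s t
      · -- s * w = t
        by_cases hs0 : s = 0
        · refine ⟨0, p.zero_mem, ?_⟩
          rw [map_zero]
          have : (a - algebraMap V (Localization.AtPrime p) c) *
              algebraMap V (Localization.AtPrime p) t = 0 := by
            rw [heq, hs0, map_zero]
          rcases mul_eq_zero.mp this with h | h
          · exact h.symm
          · exact absurd (htunit.ne_zero h) (fun h => h)
        · exfalso
          haveI : IsDomain (Localization.AtPrime p) :=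
            IsLocalization.isDomain_localization p.primeCompl_le_nonZeroDivisors
          have hsne : algebraMap V (Localization.AtPrime p) s ≠ 0 := by
            intro h
            exact hs0 (IsLocalization.injective (Localization.AtPrime p)
              p.primeCompl_le_nonZeroDivisors (by rw [h, map_zero]))
          have : algebraMap V (Localization.AtPrime p) s *
              ((a - algebraMap V (Localization.AtPrime p) c) *
                algebraMap V (Localization.AtPrime p) w - 1) = 0 := by
            have := heq
            rw [← hw, map_mul] at this
            ring_nf
            ring_nf at this
            linear_combination this
          rcases mul_eq_zero.mp this with h | h
          · exact hsne h
          · have hu : IsUnit (a - algebraMap V (Localization.AtPrime p) c) :=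
              IsUnit.of_mul_eq_one _ (sub_eq_zero.mp h)
            exact (IsLocalRing.mem_maximalIdeal _).mp hm0 hu
      · -- t * w = s
        refine ⟨w, ?_, ?_⟩
        · have : t * w ∈ p := by rwa [hw]
          exact ((Ideal.IsPrime.mem_or_mem ‹p.IsPrime› this).resolve_left ht)
        · have : (a - algebraMap V (Localization.AtPrime p) c) *
              algebraMap V (Localization.AtPrime p) t =
              algebraMap V (Localization.AtPrime p) w *
              algebraMap V (Localization.AtPrime p) t := by
            rw [heq, ← hw, map_mul]; ring
          exact (htunit.mul_right_cancel this).symm ▸ rfl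
    obtain ⟨u, hup, hu⟩ := key
    refine ⟨c + u, ?_, ?_⟩
    · rw [map_add, hu]; ring
    · rw [map_add, Ideal.Quotient.eq_zero_iff_mem.mpr hup, add_zero]
end

section
/- Every cdv cover of schemes is a v cover. That is, if a quasi-compact quasi-separated morphism of schemes f : Y → X is such that for every henselian valuation ring V, every morphism Spec V → X lifts to a morphism Spec V → Y over X, then for every valuation ring V and every morphism Spec V → X there exist an extension of valuation rings V ⊆ W (an injective local ring homomorphism of valuation rings) and a morphism Spec W → Y whose composite with f equals the composite Spec W → Spec V → X. -/
open AlgebraicGeometry CategoryTheory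

universe u

open Polynomial in
/-- A valuation subring of an algebraically closed field is henselian. -/
lemma ValuationSubring.henselian {K : Type*} [Field K] [IsAlgClosed K]
    (A : ValuationSubring K) : HenselianLocalRing A := by
  constructor
  intro f hf a₀ ha₀ _
  let φ : A →+* K := A.subtype
  have hφ : Function.Injective φ := Subtype.val_injective
  have hmap : (f.map φ).Monic := hf.map φ
  have hprod : f.map φ = ((f.map φ).roots.map fun a => X - C a).prod :=
    (IsAlgClosed.splits _).eq_prod_roots_of_monic hmap
  have hroot : ∀ r ∈ (f.map φ).roots, r ∈ A := by
    intro r hr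
    have : IsIntegral A.toSubring r :=
      ⟨f, hf, by rw [eval₂_eq_eval_map]; exact isRoot_of_mem_roots hr⟩
    exact LocalSubring.mem_of_isMax_of_isIntegral A.isMax_toLocalSubring this
  -- f.eval a₀ equals a product in A
  have keyK : ∀ b : A, φ (f.eval b) = ((f.map φ).roots.map fun r => φ b - r).prod := by
    intro b
    have h1 : φ (f.eval b) = (f.map φ).eval (φ b) := by rw [Polynomial.eval_map, Polynomial.eval₂_hom]
    rw [h1]
    conv_lhs => rw [hprod]
    rw [eval_multiset_prod, Multiset.map_map]
    simp
  have key : f.eval a₀ =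
      ((f.map φ).roots.attach.map
        (fun r => (a₀ - ⟨r.1, hroot r.1 r.2⟩ : A))).prod := by
    apply hφ
    rw [map_multiset_prod, Multiset.map_map, keyK a₀]
    conv_lhs => rw [← Multiset.attach_map_val (f.map φ).roots]
    rw [Multiset.map_map]
    rfl
  rw [key] at ha₀
  obtain ⟨x, hx, hxm⟩ :=
    ((Ideal.IsPrime.multiset_prod_mem_iff_exists_mem inferInstance _)).mp ha₀
  obtain ⟨r, hr, rfl⟩ := Multiset.mem_map.mp hx
  refine ⟨⟨r.1, hroot r.1 r.2⟩, ?_, ?_⟩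
  · apply hφ
    rw [keyK]
    simp only [map_zero]
    apply Multiset.prod_eq_zero
    refine Multiset.mem_map.mpr ⟨r.1, r.2, ?_⟩
    exact sub_eq_zero_of_eq rfl
  · simpa using (IsLocalRing.maximalIdeal A).neg_mem hxm

/-- Every cdv cover is a v cover: if `f : Y → X` is a qcqs morphism of schemes such
that every morphism `Spec V → X` with `V` a henselian valuation ring lifts to `Y`,
then for every valuation ring `V` and morphism `Spec V → X` there is an extension of
valuation rings `V ⊆ W` (an injective local ring homomorphism) and a morphism
`Spec W → Y` lying over `Spec W → Spec V → X`. -/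
theorem cdv_cover_is_v_cover {X Y : Scheme.{u}} (f : Y ⟶ X)
    [QuasiCompact f] [QuasiSeparated f]
    (hcdv : ∀ (V : Type u) [CommRing V] [IsDomain V] [ValuationRing V]
      [HenselianLocalRing V] (g : Spec (CommRingCat.of V) ⟶ X),
      ∃ l : Spec (CommRingCat.of V) ⟶ Y, l ≫ f = g) :
    ∀ (V : Type u) [CommRing V] [IsDomain V] [ValuationRing V]
      (g : Spec (CommRingCat.of V) ⟶ X),
      ∃ (W : Type u) (_ : CommRing W) (_ : IsDomain W) (_ : ValuationRing W)
        (ι : V →+* W), Function.Injective ι ∧ IsLocalHom ι ∧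
        ∃ l : Spec (CommRingCat.of W) ⟶ Y,
          l ≫ f = Spec.map (CommRingCat.ofHom ι) ≫ g := by
  intro V _ _ _ g
  let K := AlgebraicClosure (FractionRing V)
  let φ : V →+* K := (algebraMap (FractionRing V) K).comp (algebraMap V (FractionRing V))
  have hφ : Function.Injective φ :=
    (algebraMap (FractionRing V) K).injective.comp (IsFractionRing.injective V (FractionRing V))
  obtain ⟨A, h, hloc⟩ := IsLocalRing.exists_factor_valuationRing φ
  let ι : V →+* A := φ.codRestrict A.toSubring h
  haveI : HenselianLocalRing A := A.henselian
  obtain ⟨l, hl⟩ := hcdv A (Spec.map (CommRingCat.ofHom ι) ≫ g)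
  exact ⟨A, inferInstance, inferInstance, inferInstance, ι,
    fun a b hab => hφ congr(($hab).1), hloc, l, hl⟩
end

section
/- Every cdarc cover of schemes is an arc cover. That is, if a quasi-compact quasi-separated morphism of schemes f : Y → X is such that for every henselian valuation ring V of Krull dimension at most 1, every morphism Spec V → X lifts to a morphism Spec V → Y over X, then for every valuation ring V of Krull dimension at most 1 and every morphism Spec V → X there exist an extension of valuation rings V ⊆ W (an injective local ring homomorphism of valuation rings) with W of Krull dimension at most 1, and a morphism Spec W → Y whose composite with f equals the composite Spec W → Spec V → X. -/
open AlgebraicGeometry CategoryTheory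

universe u

section Auxiliary

open Polynomial

/-- A valuation ring with algebraically closed fraction field is henselian. -/
theorem henselian_of_isAlgClosed_fractionRing (R : Type*) (L : Type*) [CommRing R] [IsDomain R]
    [ValuationRing R] [Field L] [Algebra R L] [IsFractionRing R L] [IsAlgClosed L] :
    HenselianLocalRing R := by
  constructor
  intro f hf a₀ h₁ _
  suffices H : ∀ (n : ℕ) (f : R[X]), f.Monic → f.natDegree = n →
      f.eval a₀ ∈ IsLocalRing.maximalIdeal R →
      ∃ a : R, f.IsRoot a ∧ a - a₀ ∈ IsLocalRing.maximalIdeal R from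
    H f.natDegree f hf rfl h₁
  intro n
  induction n with
  | zero =>
    intro f hf hdeg h₁
    exfalso
    have : f = 1 := (Polynomial.Monic.natDegree_eq_zero hf).mp hdeg
    rw [this, Polynomial.eval_one] at h₁
    exact (IsLocalRing.maximalIdeal.isMaximal R).ne_top (Ideal.eq_top_of_isUnit_mem _ h₁ isUnit_one)
  | succ n ih =>
    intro f hf hdeg h₁
    obtain ⟨z, hz⟩ := IsAlgClosed.exists_root (f.map (algebraMap R L))
      (by
        rw [hf.degree_map (algebraMap R L)]
        intro h
        have := Polynomial.natDegree_eq_zero_iff_degree_le_zero.mpr (le_of_eq h)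
        omega)
    have hzint : IsIntegral R z :=
      ⟨f, hf, by rwa [Polynomial.eval₂_eq_eval_map]⟩
    obtain ⟨r, hr⟩ := IsIntegrallyClosed.isIntegral_iff.mp hzint
    have hroot : f.IsRoot r := by
      have : (algebraMap R L) (f.eval r) = 0 := by
        rw [← Polynomial.eval₂_at_apply, ← Polynomial.eval_map, hr]
        exact hz
      exact (map_eq_zero_iff _ (IsFractionRing.injective R L)).mp this
    obtain ⟨g, hg⟩ := (Polynomial.dvd_iff_isRoot (a := r)).mpr hroot
    have hgmonic : g.Monic := by
      have h2 := hf
      rw [hg] at h2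
      exact (Polynomial.monic_X_sub_C r).of_mul_monic_left h2
    have hgdeg : g.natDegree = n := by
      have h3 := congrArg Polynomial.natDegree hg
      rw [Polynomial.natDegree_mul (Polynomial.X_sub_C_ne_zero r) hgmonic.ne_zero,
        Polynomial.natDegree_X_sub_C] at h3
      omega
    have heval : (a₀ - r) * g.eval a₀ ∈ IsLocalRing.maximalIdeal R := by
      rw [hg] at h₁
      simpa using h₁
    have hprime : (IsLocalRing.maximalIdeal R).IsPrime := Ideal.IsMaximal.isPrime inferInstance
    rcases hprime.mem_or_mem heval with hcase | hcase
    · exact ⟨r, hroot, by simpa using (IsLocalRing.maximalIdeal R).neg_mem hcase⟩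
    · obtain ⟨a, ha1, ha2⟩ := ih g hgmonic hgdeg hcase
      refine ⟨a, ?_, ha2⟩
      rw [hg]
      simp [Polynomial.IsRoot] at ha1 ⊢
      right; exact ha1

/-- In an algebraic extension of valued fields, a positive power of the valuation of
any nonzero element of the valuation subring is the valuation of an element of the
base field. -/
lemma valuation_pow_eq_algebraMap {K L : Type*} [Field K] [Field L] [Algebra K L]
    [Algebra.IsAlgebraic K L] (A : ValuationSubring L) (w : A) (hw : (w : L) ≠ 0) :
    ∃ (d : ℕ) (z : K), 0 < d ∧ algebraMap K L z ∈ A ∧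
      A.valuation ((w : L) ^ d) = A.valuation (algebraMap K L z) := by
  set v := A.valuation with hv
  obtain ⟨p, hp0, hpw⟩ := (Algebra.IsAlgebraic.isAlgebraic (R := K) (w : L))
  set T : ℕ → L := fun i => algebraMap K L (p.coeff i) * (w : L) ^ i with hT
  have hsum : ∑ i ∈ p.support, T i = 0 := by
    rw [← hpw, Polynomial.aeval_def, Polynomial.eval₂_eq_sum, Polynomial.sum_def]
  have hTne : ∀ i ∈ p.support, T i ≠ 0 := by
    intro i hi
    simp only [hT]
    exact mul_ne_zero (by
      simpa using fun h => Polynomial.mem_support_iff.mp hi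
        ((map_eq_zero_iff _ (algebraMap K L).injective).mp h)) (pow_ne_zero _ hw)
  obtain ⟨i, his, hmax⟩ := p.support.exists_max_image (fun i => v (T i))
    (Polynomial.nonempty_support_iff.mpr hp0)
  have hvine : v (T i) ≠ 0 := by
    simpa using hTne i his
  have hexj : ∃ j ∈ p.support.erase i, v (T j) = v (T i) := by
    by_contra hcon
    push_neg at hcon
    have hlt : ∀ j ∈ p.support.erase i, v (T j) < v (T i) := fun j hj =>
      lt_of_le_of_ne (hmax j (Finset.mem_of_mem_erase hj)) (hcon j hj)
    have h1 : v (∑ j ∈ p.support.erase i, T j) < v (T i) :=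
      Valuation.map_sum_lt _ hvine hlt
    have h2 : ∑ j ∈ p.support.erase i, T j = - T i := by
      have := Finset.add_sum_erase _ T his
      rw [hsum] at this
      exact eq_neg_of_add_eq_zero_right this
    rw [h2, Valuation.map_neg] at h1
    exact lt_irrefl _ h1
  obtain ⟨j, hjs, hji⟩ := hexj
  have hjne : j ≠ i := Finset.ne_of_mem_erase hjs
  have hjsup : j ∈ p.support := Finset.mem_of_mem_erase hjs
  have inner : ∀ a b : ℕ, a ∈ p.support → b ∈ p.support → a < b → v (T a) = v (T b) →
      ∃ (d : ℕ) (z : K), 0 < d ∧ algebraMap K L z ∈ A ∧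
        v ((w : L) ^ d) = v (algebraMap K L z) := by
    intro a b ha hb hab heq
    have hca0 : algebraMap K L (p.coeff a) ≠ 0 := fun h =>
      Polynomial.mem_support_iff.mp ha ((map_eq_zero_iff _ (algebraMap K L).injective).mp h)
    have hcb0 : algebraMap K L (p.coeff b) ≠ 0 := fun h =>
      Polynomial.mem_support_iff.mp hb ((map_eq_zero_iff _ (algebraMap K L).injective).mp h)
    have hvcb : v (algebraMap K L (p.coeff b)) ≠ 0 := by rwa [Ne, Valuation.zero_iff]
    have hvw : v (w : L) ≠ 0 := by rwa [Ne, Valuation.zero_iff]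
    simp only [hT, map_mul, map_pow] at heq
    have hbeq : b = a + (b - a) := by omega
    rw [hbeq, pow_add, ← mul_assoc] at heq
    have hcancel : v (algebraMap K L (p.coeff a)) =
        v (algebraMap K L (p.coeff b)) * v (w : L) ^ (b - a) := by
      apply mul_right_cancel₀ (pow_ne_zero a hvw)
      rw [heq, ← hbeq, mul_right_comm]
    have hkey : v ((w : L) ^ (b - a)) = v (algebraMap K L (p.coeff a / p.coeff b)) := by
      rw [map_div₀, map_div₀, map_pow, eq_div_iff hvcb, mul_comm]
      exact hcancel.symm
    refine ⟨b - a, p.coeff a / p.coeff b, by omega, ?_, hkey⟩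
    apply A.mem_of_valuation_le_one
    rw [← hkey]
    have h1 := A.valuation_le_one (w ^ (b - a))
    rwa [show ((w ^ (b - a) : A) : L) = (w : L) ^ (b - a) from by push_cast; ring] at h1
  rcases lt_or_gt_of_ne hjne with h | h
  · exact inner j i hjsup his h hji
  · exact inner i j his hjsup h hji.symm

end Auxiliary

/-- Every cdarc cover is an arc cover: if `f : Y → X` is a qcqs morphism of schemes
such that every morphism `Spec V → X` with `V` a henselian valuation ring of Krull
dimension at most `1` lifts to `Y`, then for every valuation ring `V` of Krull
dimension at most `1` and morphism `Spec V → X` there is an extension of valuation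
rings `V ⊆ W` (an injective local ring homomorphism) with `W` of Krull dimension at
most `1`, and a morphism `Spec W → Y` lying over `Spec W → Spec V → X`. -/
theorem cdarc_cover_is_arc_cover {X Y : Scheme.{u}} (f : Y ⟶ X)
    [QuasiCompact f] [QuasiSeparated f]
    (hcdarc : ∀ (V : Type u) [CommRing V] [IsDomain V] [ValuationRing V]
      [HenselianLocalRing V], ringKrullDim V ≤ 1 →
      ∀ g : Spec (CommRingCat.of V) ⟶ X,
      ∃ l : Spec (CommRingCat.of V) ⟶ Y, l ≫ f = g) :
    ∀ (V : Type u) [CommRing V] [IsDomain V] [ValuationRing V], ringKrullDim V ≤ 1 →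
      ∀ g : Spec (CommRingCat.of V) ⟶ X,
      ∃ (W : Type u) (_ : CommRing W) (_ : IsDomain W) (_ : ValuationRing W),
        ringKrullDim W ≤ 1 ∧
        ∃ ι : V →+* W, Function.Injective ι ∧ IsLocalHom ι ∧
        ∃ l : Spec (CommRingCat.of W) ⟶ Y,
          l ≫ f = Spec.map (CommRingCat.ofHom ι) ≫ g := by
  intro V _ _ _ hV g
  letI K := FractionRing V
  letI L := AlgebraicClosure K
  haveI : IsLocalRing V := ValuationRing.isLocalRing V
  obtain ⟨A, hmem, hloc⟩ := IsLocalRing.exists_factor_valuationRing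
    ((algebraMap K L).comp (algebraMap V K))
  set ι : V →+* A :=
    ((algebraMap K L).comp (algebraMap V K)).codRestrict A.toSubring hmem with hι
  have hιinj : Function.Injective ι := by
    intro x y hxy
    apply IsFractionRing.injective V K
    apply (algebraMap K L).injective
    exact congrArg Subtype.val hxy
  haveI hhens : HenselianLocalRing A := henselian_of_isAlgClosed_fractionRing A L
  -- key divisibility fact
  have key : ∀ w : A, (w : L) ≠ 0 → ∃ (d : ℕ) (t : V) (u : Aˣ),
      0 < d ∧ (u : A) * ι t = w ^ d := by
    intro w hw
    obtain ⟨d, z, hd, hzA, hval⟩ := valuation_pow_eq_algebraMap (K := K) A w hw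
    obtain ⟨u, hu⟩ := (A.valuation_eq_iff _ _).mp hval
    have hz0 : z ≠ 0 := by
      rintro rfl
      simp only [map_zero, mul_zero] at hu
      exact hw (pow_eq_zero_iff (by omega) |>.mp hu.symm)
    -- find t : V mapping to z
    have hex : ∃ t : V, algebraMap V K t = z := by
      rcases ValuationRing.isInteger_or_isInteger V z with ⟨t, ht⟩ | ⟨t, ht⟩
      · exact ⟨t, ht⟩
      · -- z⁻¹ comes from V; show it is a unit there
        have htA : IsUnit (ι t) := by
          refine isUnit_iff_exists_inv.mpr ⟨⟨algebraMap K L z, hzA⟩, ?_⟩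
          apply Subtype.ext
          show algebraMap K L (algebraMap V K t) * algebraMap K L z = 1
          rw [ht, ← map_mul, inv_mul_cancel₀ hz0, map_one]
        have htV : IsUnit t := hloc.map_nonunit t htA
        obtain ⟨vt, rfl⟩ := htV
        refine ⟨(vt⁻¹ : Vˣ), ?_⟩
        have h1 : algebraMap V K ((vt⁻¹ : Vˣ) : V) * algebraMap V K (vt : V) = 1 := by
          rw [← map_mul]
          simp
        rw [ht] at h1
        exact (mul_inv_eq_one₀ hz0).mp h1
    obtain ⟨t, ht⟩ := hex
    refine ⟨d, t, u, hd, ?_⟩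
    apply Subtype.ext
    show (u : L) * algebraMap K L (algebraMap V K t) = ((w ^ d : A) : L)
    rw [ht, hu]
    push_cast
    ring
  -- Krull dimension bound via strict monotonicity of comap on primes
  have hstrict : StrictMono (fun p : PrimeSpectrum A => PrimeSpectrum.comap ι p) := by
    intro p q hpq
    have hle : (PrimeSpectrum.comap ι p) ≤ (PrimeSpectrum.comap ι q) := by
      exact Ideal.comap_mono (le_of_lt hpq)
    refine lt_of_le_of_ne hle ?_
    obtain ⟨w, hwq, hwp⟩ := SetLike.exists_of_lt (show p.asIdeal < q.asIdeal from hpq)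
    have hw0 : (w : L) ≠ 0 := by
      intro h
      apply hwp
      have : w = 0 := Subtype.ext h
      rw [this]
      exact p.asIdeal.zero_mem
    obtain ⟨d, t, u, hd, hut⟩ := key w hw0
    intro hcontra'
    replace hcontra : (PrimeSpectrum.comap ι) p = (PrimeSpectrum.comap ι) q := hcontra'
    have htq : t ∈ (PrimeSpectrum.comap ι q).asIdeal := by
      show ι t ∈ q.asIdeal
      have hwd : w ^ d ∈ q.asIdeal := Ideal.pow_mem_of_mem _ hwq d hd
      have : ι t = (u⁻¹ : Aˣ) * (w ^ d) := by
        rw [← hut, ← mul_assoc]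
        simp
      rw [this]
      exact Ideal.mul_mem_left _ _ hwd
    have htp : t ∈ (PrimeSpectrum.comap ι p).asIdeal := by
      rw [hcontra]; exact htq
    have : ι t ∈ p.asIdeal := htp
    have hwdp : w ^ d ∈ p.asIdeal := by
      rw [← hut]
      exact Ideal.mul_mem_left _ _ this
    exact hwp (p.isPrime.mem_of_pow_mem d hwdp)
  have hdim : ringKrullDim ↥A ≤ 1 :=
    le_trans (Order.krullDim_le_of_strictMono _ hstrict) hV
  obtain ⟨l, hl⟩ := hcdarc ↥A hdim (Spec.map (CommRingCat.ofHom ι) ≫ g)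
  exact ⟨↥A, inferInstance, inferInstance, inferInstance, hdim, ι, hιinj, hloc, l, hl⟩
end

section
/- Let f : A → B be a ring homomorphism and I ⊆ A an ideal forming a Milnor square, i.e., the natural map A → B ×_{B/IB} A/I is an isomorphism, where IB denotes the ideal of B generated by f(I). Let V be a valuation ring of Krull dimension at most 1 and g : A → V any ring homomorphism. Then either g(I) = 0 (so g factors through A/I), or there exists a ring homomorphism h : B → V with h ∘ f = g. -/
/-- The induced map `A/I → B/IB` of a ring homomorphism `f : A → B` and ideal `I ⊆ A`,
where `IB = I.map f` is the ideal of `B` generated by `f(I)`. -/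
def quotientMapOfMilnor {A B : Type*} [CommRing A] [CommRing B] (f : A →+* B)
    (I : Ideal A) : A ⧸ I →+* B ⧸ I.map f :=
  Ideal.Quotient.lift I ((Ideal.Quotient.mk (I.map f)).comp f)
    (fun _ ha => Ideal.Quotient.eq_zero_iff_mem.mpr (Ideal.mem_map_of_mem f ha))

/-- `(f : A → B, I ⊆ A)` is a Milnor square if the natural ring map
`A → B ×_{B/IB} A/I` is an isomorphism, i.e. `a ↦ (f a, ā)` is injective and every
pair `(b, c) ∈ B × A/I` with equal image in `B/IB` lifts to some `a ∈ A`. -/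
def IsMilnorSquare {A B : Type*} [CommRing A] [CommRing B] (f : A →+* B)
    (I : Ideal A) : Prop :=
  (Function.Injective fun a : A => (f a, Ideal.Quotient.mk I a)) ∧
  ∀ (b : B) (c : A ⧸ I), Ideal.Quotient.mk (I.map f) b = quotientMapOfMilnor f I c →
    ∃ a : A, f a = b ∧ Ideal.Quotient.mk I a = c

/-- In a local domain of Krull dimension at most one, a nonzero nonunit cannot be
divisible by all powers of a nonunit. -/
lemma aux_dim_milnor {V : Type*} [CommRing V] [IsDomain V] [IsLocalRing V]
    (hV : ringKrullDim V ≤ 1) {x y : V} (hx : x ≠ 0) (_hxu : ¬ IsUnit x)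
    (hyu : ¬ IsUnit y) (hdvd : ∀ n : ℕ, y ^ n ∣ x) : False := by
  have hy : y ≠ 0 := by
    rintro rfl
    exact hx (zero_dvd_iff.mp (by simpa using hdvd 1))
  -- `y` is not in the radical of `(x)`
  have hynrad : y ∉ (Ideal.span {x}).radical := by
    intro hmem
    obtain ⟨m, hm⟩ := hmem
    rw [Ideal.mem_span_singleton] at hm
    obtain ⟨d, hd⟩ := hm
    obtain ⟨c, hc⟩ := hdvd (m + 1)
    have key : y ^ m * (y * (c * d)) = y ^ m * 1 := by
      calc y ^ m * (y * (c * d)) = y ^ (m + 1) * c * d := by ring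
        _ = y ^ m * 1 := by rw [← hc, mul_one]; exact hd.symm
    exact hyu (IsUnit.of_mul_eq_one _ (mul_left_cancel₀ (pow_ne_zero m hy) key))
  -- hence there is a prime over `(x)` avoiding `y`
  have hex : ∃ p : Ideal V, (Ideal.span {x} ≤ p ∧ p.IsPrime) ∧ y ∉ p := by
    by_contra hcon
    push_neg at hcon
    exact hynrad (by
      rw [Ideal.radical_eq_sInf]
      exact Ideal.mem_sInf.mpr fun {J} hJ => hcon J hJ)
  obtain ⟨p, ⟨hxp, hpprime⟩, hyp⟩ := hex
  have hxmem : x ∈ p := hxp (Ideal.subset_span rfl)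
  -- the chain ⊥ < p < maximal ideal
  have h0p : (⊥ : Ideal V) < p :=
    lt_of_le_of_ne bot_le (by rintro rfl; exact hx hxmem)
  have hpm : p < IsLocalRing.maximalIdeal V :=
    lt_of_le_of_ne (IsLocalRing.le_maximalIdeal hpprime.ne_top)
      (fun h => hyp (h ▸ IsLocalRing.mem_maximalIdeal y |>.mpr hyu))
  let P0 : PrimeSpectrum V := ⟨⊥, Ideal.bot_prime⟩
  let P1 : PrimeSpectrum V := ⟨p, hpprime⟩
  let P2 : PrimeSpectrum V := ⟨IsLocalRing.maximalIdeal V,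
    (IsLocalRing.maximalIdeal.isMaximal V).isPrime⟩
  let c : LTSeries (PrimeSpectrum V) :=
    { length := 2
      toFun := ![P0, P1, P2]
      step := by
        intro i
        fin_cases i
        · exact (PrimeSpectrum.asIdeal_lt_asIdeal P0 P1).mp h0p
        · exact (PrimeSpectrum.asIdeal_lt_asIdeal P1 P2).mp hpm }
  have h2 : (2 : WithBot (WithTop ℕ)) ≤ ringKrullDim V := by
    have := Order.LTSeries.length_le_krullDim c
    exact_mod_cast this
  have : (2 : WithBot (WithTop ℕ)) ≤ 1 := h2.trans hV
  norm_num at this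

/-- Let `(f : A → B, I)` be a Milnor square and `g : A → V` a ring homomorphism into a
valuation ring `V` of Krull dimension at most `1`. Then either `g(I) = 0` (so `g`
factors through `A/I`), or `g` factors through `f`. -/
theorem milnor_square_factor_of_rank_le_one {A B V : Type*}
    [CommRing A] [CommRing B] [CommRing V] [IsDomain V] [ValuationRing V]
    (f : A →+* B) (I : Ideal A) (hM : IsMilnorSquare f I)
    (hV : ringKrullDim V ≤ 1) (g : A →+* V) :
    (∀ x ∈ I, g x = 0) ∨ ∃ h : B →+* V, h.comp f = g := by
  obtain ⟨hinj, hsurj⟩ := hM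
  by_cases hg : ∀ x ∈ I, g x = 0
  · exact Or.inl hg
  right
  push_neg at hg
  obtain ⟨t0, ht0I, ht0⟩ := hg
  -- two elements of `I` with equal image under `f` are equal
  have eqI : ∀ x y : A, x ∈ I → y ∈ I → f x = f y → x = y := by
    intro x y hxI hyI hf
    apply hinj
    show (f x, Ideal.Quotient.mk I x) = (f y, Ideal.Quotient.mk I y)
    have h2 : Ideal.Quotient.mk I x = Ideal.Quotient.mk I y := by
      rw [Ideal.Quotient.eq_zero_iff_mem.mpr hxI, Ideal.Quotient.eq_zero_iff_mem.mpr hyI]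
    exact Prod.ext hf h2
  -- multiples of `f t`, `t ∈ I`, lift into `I`
  have lift : ∀ (b : B) (t : A), t ∈ I → ∃ a : A, f a = b * f t ∧ a ∈ I := by
    intro b t ht
    obtain ⟨a, ha1, ha2⟩ := hsurj (b * f t) 0 (by
      rw [map_zero, Ideal.Quotient.eq_zero_iff_mem]
      exact Ideal.mul_mem_left _ b (Ideal.mem_map_of_mem f ht))
    exact ⟨a, ha1, Ideal.Quotient.eq_zero_iff_mem.mp ha2⟩
  -- key divisibility
  have key : ∀ (b : B) (a : A), a ∈ I → f a = b * f t0 → g t0 ∣ g a := by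
    intro b a haI ha
    by_contra hnd
    obtain ⟨y, hy⟩ : ∃ y, g a * y = g t0 := by
      rcases ValuationRing.cond (g t0) (g a) with ⟨c, hc | hc⟩
      · exact absurd ⟨c, hc.symm⟩ hnd
      · exact ⟨c, hc⟩
    have hga : g a ≠ 0 := by rintro h; rw [h, zero_mul] at hy; exact ht0 hy.symm
    have hyu : ¬ IsUnit y := by
      intro hu
      obtain ⟨u, rfl⟩ := hu
      exact hnd ⟨(↑u⁻¹ : Vˣ), by rw [← hy, mul_assoc, Units.mul_inv, mul_one]⟩
    -- iterated lifts
    have liftC : ∀ p : {x : A // x ∈ I}, ∃ q : {x : A // x ∈ I}, f q.1 = b * f p.1 := by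
      intro p
      obtain ⟨a', h1, h2⟩ := lift b p.1 p.2
      exact ⟨⟨a', h2⟩, h1⟩
    choose F hF using liftC
    let T : ℕ → {x : A // x ∈ I} := fun n => Nat.rec ⟨a, haI⟩ (fun _ p => F p) n
    have hTstep : ∀ n, f (T (n + 1)).1 = b * f (T n).1 := fun n => hF (T n)
    -- cross relation:  T (n+1) * t0 = a * T n
    have hcross : ∀ n, (T (n + 1)).1 * t0 = a * (T n).1 := by
      intro n
      apply eqI _ _ (I.mul_mem_right t0 (T (n + 1)).2) (I.mul_mem_right _ haI)
      rw [map_mul, map_mul, hTstep n, ha]; ring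
    have hrec : ∀ n, g (T (n + 1)).1 * y = g (T n).1 := by
      intro n
      apply mul_left_cancel₀ hga
      have := congrArg g (hcross n)
      rw [map_mul, map_mul] at this
      calc g a * (g (T (n + 1)).1 * y) = g (T (n + 1)).1 * g t0 := by rw [← hy]; ring
        _ = g a * g (T n).1 := this
    have hpow : ∀ n, g a = g (T n).1 * y ^ n := by
      intro n
      induction n with
      | zero => simp [T]
      | succ k ih => rw [ih, ← hrec k]; ring
    refine aux_dim_milnor hV hga ?_ hyu (fun n => ⟨g (T n).1, by rw [hpow n]; ring⟩)
    intro hu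
    have h1 : g (T 1).1 * y = g a := hrec 0
    rw [← h1] at hu
    exact hyu (isUnit_of_mul_isUnit_right hu)
  -- choose canonical lifts and quotients
  choose c0 hc0f hc0I using fun b => lift b t0 ht0I
  choose w hw using fun b => key b (c0 b) (hc0I b) (hc0f b)
  -- hw : g (c0 b) = g t0 * w b
  have hwu : ∀ (b : B) (v : V), g t0 * v = g (c0 b) → v = w b := by
    intro b v hv
    apply mul_left_cancel₀ ht0
    rw [hv, hw b]
  have hc0 : ∀ x : A, c0 (f x) = x * t0 := by
    intro x
    exact eqI _ _ (hc0I _) (I.mul_mem_left x ht0I) (by rw [hc0f, map_mul])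
  refine ⟨{ toFun := w
            map_one' := ?_
            map_mul' := ?_
            map_zero' := ?_
            map_add' := ?_ }, ?_⟩
  · -- w 1 = 1
    apply (hwu 1 1 ?_).symm
    rw [mul_one]
    congr 1
    exact (eqI t0 (c0 1) ht0I (hc0I 1) (by rw [hc0f, one_mul]))
  · -- multiplicativity
    intro b b'
    have hprod : c0 (b * b') * t0 = c0 b * c0 b' := by
      apply eqI _ _ (I.mul_mem_right _ (hc0I _)) (I.mul_mem_right _ (hc0I b))
      rw [map_mul, map_mul, hc0f, hc0f, hc0f]; ring
    apply mul_left_cancel₀ ht0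
    apply mul_left_cancel₀ ht0
    have := congrArg g hprod
    rw [map_mul, map_mul, hw, hw, hw] at this
    calc g t0 * (g t0 * w (b * b')) = g t0 * w (b * b') * g t0 := by ring
      _ = g t0 * w b * (g t0 * w b') := by rw [this]
      _ = g t0 * (g t0 * (w b * w b')) := by ring
  · -- w 0 = 0
    apply (hwu 0 0 ?_).symm
    rw [mul_zero]
    have : c0 (0 : B) = 0 := eqI _ _ (hc0I 0) I.zero_mem (by rw [hc0f, map_zero, zero_mul])
    rw [this, map_zero]
  · -- additivity
    intro b b'
    apply (hwu (b + b') (w b + w b') ?_).symm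
    have hsum : c0 (b + b') = c0 b + c0 b' := by
      apply eqI _ _ (hc0I _) (I.add_mem (hc0I b) (hc0I b'))
      rw [map_add, hc0f, hc0f, hc0f, add_mul]
    rw [hsum, map_add, hw, hw]; ring
  · -- compatibility with f
    ext x
    show w (f x) = g x
    apply (hwu (f x) (g x) ?_).symm
    rw [hc0 x, map_mul]; ring
end

section
/- Let f : A → B and I ⊆ A form a Milnor square, i.e., A → B ×_{B/IB} A/I is an isomorphism. Let A → A' be a flat ring homomorphism. Then the base-changed square is again a Milnor square: the natural map A' → (B ⊗_A A') ×_{(B ⊗_A A')/I(B ⊗_A A')} A'/IA' is an isomorphism. -/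
open scoped TensorProduct

/-- Characterization: Milnor square iff `f` restricted to `I` is injective with image
exactly the ideal `I.map f`. -/
lemma isMilnorSquare_iff {A B : Type*} [CommRing A] [CommRing B] (f : A →+* B)
    (I : Ideal A) :
    IsMilnorSquare f I ↔
      (∀ a ∈ I, f a = 0 → a = 0) ∧ (∀ b ∈ I.map f, ∃ a ∈ I, f a = b) := by
  constructor
  · rintro ⟨hinj, hsurj⟩
    refine ⟨fun a ha hfa => ?_, fun b hb => ?_⟩
    · have h : (fun a : A => (f a, Ideal.Quotient.mk I a)) a
          = (fun a : A => (f a, Ideal.Quotient.mk I a)) 0 := by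
        simp only [Prod.mk.injEq, map_zero]
        exact ⟨hfa, Ideal.Quotient.eq_zero_iff_mem.mpr ha⟩
      exact hinj h
    · obtain ⟨a, hab, ha⟩ := hsurj b 0 (by
        rw [map_zero, Ideal.Quotient.eq_zero_iff_mem]; exact hb)
      exact ⟨a, Ideal.Quotient.eq_zero_iff_mem.mp ha, hab⟩
  · rintro ⟨h1, h2⟩
    constructor
    · intro a₁ a₂ h
      simp only [Prod.mk.injEq] at h
      have hI : a₁ - a₂ ∈ I := by
        rw [← Ideal.Quotient.eq_zero_iff_mem, map_sub, sub_eq_zero]; exact h.2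
      have : a₁ - a₂ = 0 := h1 _ hI (by rw [map_sub, sub_eq_zero]; exact h.1)
      exact sub_eq_zero.mp this
    · intro b c hbc
      obtain ⟨a₀, rfl⟩ := Ideal.Quotient.mk_surjective c
      have hq : quotientMapOfMilnor f I (Ideal.Quotient.mk I a₀)
          = Ideal.Quotient.mk (I.map f) (f a₀) := rfl
      have hmem : b - f a₀ ∈ I.map f := by
        rw [← Ideal.Quotient.eq_zero_iff_mem, map_sub, hbc, hq, sub_self]
      obtain ⟨i, hi, hfi⟩ := h2 _ hmem
      refine ⟨a₀ + i, by rw [map_add, hfi]; ring, ?_⟩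
      rw [map_add, Ideal.Quotient.eq_zero_iff_mem.mpr hi, add_zero]

section Aux

variable {A B A' : Type*} [CommRing A] [CommRing B] [CommRing A'] [Algebra A B]
  [Algebra A A'] (I : Ideal A)

/-- The multiplication map `A' ⊗[A] I →ₗ[A'] A'`. -/
noncomputable def milnorAlpha : A' ⊗[A] I →ₗ[A'] A' :=
  (Algebra.TensorProduct.rid A A' A').toLinearMap ∘ₗ
    ((Submodule.subtype I).baseChange A')

/-- The map `A' ⊗[A] I →ₗ[A] B ⊗[A] A'`, `a' ⊗ i ↦ f(i) ⊗ a'`. -/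
noncomputable def milnorM : A' ⊗[A] I →ₗ[A] B ⊗[A] A' :=
  (Algebra.TensorProduct.comm A A' B).toLinearMap ∘ₗ
    (((Algebra.linearMap A B) ∘ₗ (Submodule.subtype I)).baseChange A').restrictScalars A

@[simp] lemma milnorAlpha_tmul (a' : A') (i : I) :
    milnorAlpha I (a' ⊗ₜ i) = algebraMap A A' i * a' := by
  simp [milnorAlpha, Algebra.smul_def]

@[simp] lemma milnorM_tmul (a' : A') (i : I) :
    milnorM (B := B) I (a' ⊗ₜ i) = algebraMap A B i ⊗ₜ a' := by
  simp [milnorM]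

lemma milnorM_eq (z : A' ⊗[A] I) :
    (1 : B) ⊗ₜ[A] (milnorAlpha I z) = milnorM (B := B) I z := by
  induction z using TensorProduct.induction_on with
  | zero => simp
  | tmul a' i =>
      rw [milnorAlpha_tmul, milnorM_tmul, ← Algebra.smul_def, ← TensorProduct.smul_tmul,
        Algebra.smul_def, mul_one]
  | add x y hx hy => rw [map_add, map_add, TensorProduct.tmul_add, hx, hy]

end Aux

/-- Milnor squares are stable under flat base change: if `(A → B, I)` is a Milnor
square and `A → A'` is flat, then `(A' → B ⊗[A] A', IA')` is again a Milnor square. -/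
theorem isMilnorSquare_baseChange_of_flat {A B A' : Type*}
    [CommRing A] [CommRing B] [CommRing A'] [Algebra A B] [Algebra A A']
    [Module.Flat A A'] (I : Ideal A) (hM : IsMilnorSquare (algebraMap A B) I) :
    IsMilnorSquare
      (Algebra.TensorProduct.includeRight (R := A) (A := B) (B := A')).toRingHom
      (I.map (algebraMap A A')) := by
  rw [isMilnorSquare_iff] at hM ⊢
  obtain ⟨h1, h2⟩ := hM
  set J : Ideal A' := I.map (algebraMap A A') with hJdef
  set g : A' →+* B ⊗[A] A' :=
    (Algebra.TensorProduct.includeRight (R := A) (A := B) (B := A')).toRingHom with hgdef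
  have hg : ∀ x : A', g x = (1 : B) ⊗ₜ x := fun x => rfl
  -- injectivity of M
  have hMinj : Function.Injective (milnorM (A' := A') (B := B) I) := by
    have hφ : Function.Injective ((Algebra.linearMap A B) ∘ₗ (Submodule.subtype I)) := by
      intro x y hxy
      simp only [LinearMap.comp_apply, Submodule.subtype_apply, Algebra.linearMap_apply] at hxy
      have : ((x : A) - y) = 0 := h1 _ (I.sub_mem x.2 y.2) (by rw [map_sub, hxy, sub_self])
      exact Subtype.ext (sub_eq_zero.mp this)
    have hbc : Function.Injective
        ((((Algebra.linearMap A B) ∘ₗ (Submodule.subtype I)).baseChange A')) := by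
      rw [show ((((Algebra.linearMap A B) ∘ₗ (Submodule.subtype I)).baseChange A') :
          A' ⊗[A] I → A' ⊗[A] B) = LinearMap.lTensor A' _ from
        LinearMap.baseChange_eq_ltensor _]
      exact Module.Flat.lTensor_preserves_injective_linearMap _ hφ
    intro x y hxy
    apply hbc
    apply (Algebra.TensorProduct.comm A A' B).injective
    exact hxy
  -- range of alpha contains J
  have hJle : ∀ x ∈ J, ∃ z : A' ⊗[A] I, milnorAlpha I z = x := by
    intro x hx
    have : J ≤ Submodule.restrictScalars A' (LinearMap.range (milnorAlpha (A' := A') I)) := by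
      rw [hJdef, Ideal.map, Ideal.span_le]
      rintro _ ⟨i, hi, rfl⟩
      exact ⟨(1 : A') ⊗ₜ ⟨i, hi⟩, by simp⟩
    exact this hx
  -- alpha lands in J
  have hαJ : ∀ z : A' ⊗[A] I, milnorAlpha I z ∈ J := by
    intro z
    induction z using TensorProduct.induction_on with
    | zero => simp
    | tmul a' i =>
        rw [milnorAlpha_tmul]
        exact J.mul_mem_right a' (Ideal.mem_map_of_mem _ i.2)
    | add x y hx hy => rw [map_add]; exact J.add_mem hx hy
  -- multiplication closure of range of M
  have hmul : ∀ (r : B ⊗[A] A') (z : A' ⊗[A] I),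
      ∃ z', milnorM (B := B) I z' = r * milnorM (B := B) I z := by
    intro r
    induction r using TensorProduct.induction_on with
    | zero => exact fun z => ⟨0, by simp⟩
    | tmul b a'' =>
        intro z
        induction z using TensorProduct.induction_on with
        | zero => exact ⟨0, by simp⟩
        | tmul a' i =>
            obtain ⟨j, hj, hfj⟩ := h2 (b * algebraMap A B i)
              (Ideal.mul_mem_left _ b (Ideal.mem_map_of_mem _ i.2))
            refine ⟨(a'' * a') ⊗ₜ ⟨j, hj⟩, ?_⟩
            rw [milnorM_tmul, milnorM_tmul, Algebra.TensorProduct.tmul_mul_tmul, hfj]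
        | add x y hx hy =>
            obtain ⟨zx, hzx⟩ := hx
            obtain ⟨zy, hzy⟩ := hy
            exact ⟨zx + zy, by rw [map_add, hzx, hzy, map_add, mul_add]⟩
    | add r₁ r₂ h₁ h₂ =>
        intro z
        obtain ⟨z₁, hz₁⟩ := h₁ z
        obtain ⟨z₂, hz₂⟩ := h₂ z
        exact ⟨z₁ + z₂, by rw [map_add, hz₁, hz₂, add_mul]⟩
  -- J.map g = I.map (algebraMap A (B ⊗ A'))
  have hcomp : g.comp (algebraMap A A') = algebraMap A (B ⊗[A] A') := by
    ext x
    rw [RingHom.comp_apply, hg, Algebra.TensorProduct.algebraMap_apply']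
  have hK : J.map g = I.map (algebraMap A (B ⊗[A] A')) := by
    rw [hJdef, Ideal.map_map, hcomp]
  -- every element of I.map (algebraMap A (B ⊗ A')) is in range of M
  have hKrange : ∀ y ∈ I.map (algebraMap A (B ⊗[A] A')),
      ∃ z : A' ⊗[A] I, milnorM (B := B) I z = y := by
    intro y hy
    rw [Ideal.map] at hy
    refine Submodule.span_induction ?_ ⟨0, map_zero _⟩ ?_ ?_ hy
    · rintro _ ⟨i, hi, rfl⟩
      refine ⟨(1 : A') ⊗ₜ ⟨i, hi⟩, ?_⟩
      rw [milnorM_tmul, Algebra.TensorProduct.algebraMap_apply]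
    · rintro x y - - ⟨zx, hzx⟩ ⟨zy, hzy⟩
      exact ⟨zx + zy, by rw [map_add, hzx, hzy]⟩
    · rintro r x - ⟨z, hz⟩
      obtain ⟨z', hz'⟩ := hmul r z
      exact ⟨z', by rw [hz', hz, smul_eq_mul]⟩
  constructor
  · intro x hx h0
    obtain ⟨z, rfl⟩ := hJle x hx
    have : milnorM (B := B) I z = 0 := by
      rw [← milnorM_eq]
      exact h0
    have hz : z = 0 := hMinj (by rw [this, map_zero])
    rw [hz, map_zero]
  · intro y hy
    rw [hK] at hy
    obtain ⟨z, rfl⟩ := hKrange y hy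
    exact ⟨milnorAlpha I z, hαJ z, by rw [hg, milnorM_eq]⟩
end

section
/- Let f : A → B and I ⊆ A form a Milnor square, i.e., A → B ×_{B/IB} A/I is an isomorphism. Let A → A' be any ring homomorphism with A' a reduced ring. Then the base-changed square is again a Milnor square: the natural map A' → (B ⊗_A A') ×_{(B ⊗_A A')/I(B ⊗_A A')} A'/IA' is an isomorphism. -/
open scoped TensorProduct

section Aux

variable {A B A' : Type*} [CommRing A] [CommRing B] [CommRing A'] [Algebra A B] [Algebra A A']
  {I : Ideal A}

/-- In a Milnor square, `f(I) = IB`: any `f(i) * b` is `f(j)` for some `j ∈ I`. -/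
lemma milnor_lift (hM : IsMilnorSquare (algebraMap A B) I) {i : A} (hi : i ∈ I) (b : B) :
    ∃ j, j ∈ I ∧ algebraMap A B j = algebraMap A B i * b := by
  obtain ⟨a, ha1, ha2⟩ := hM.2 (algebraMap A B i * b) 0 (by
    rw [map_zero]
    exact Ideal.Quotient.eq_zero_iff_mem.mpr
      (Ideal.mul_mem_right b _ (Ideal.mem_map_of_mem _ hi)))
  exact ⟨a, Ideal.Quotient.eq_zero_iff_mem.mp ha2, ha1⟩

/-- Key injectivity lemma. -/
lemma milnor_mul_eq_zero (hM : IsMilnorSquare (algebraMap A B) I) {i : A} (hi : i ∈ I)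
    {z : A'} (hz : (1 : B) ⊗ₜ[A] z = 0) : algebraMap A A' i * z = 0 := by
  classical
  -- the A-linear map φ : B → A with f (φ b) = f i * b and φ b ∈ I
  let φ0 : B → A := fun b => (milnor_lift hM hi b).choose
  have hspec1 : ∀ b : B, algebraMap A B (φ0 b) = algebraMap A B i * b :=
    fun b => (milnor_lift hM hi b).choose_spec.2
  have hspec2 : ∀ b : B, Ideal.Quotient.mk I (φ0 b) = 0 :=
    fun b => Ideal.Quotient.eq_zero_iff_mem.mpr (milnor_lift hM hi b).choose_spec.1
  have φadd : ∀ x y : B, φ0 (x + y) = φ0 x + φ0 y := by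
    intro x y
    apply hM.1
    ext
    · simp only [map_add, hspec1]
      ring
    · simp only [map_add, hspec2, add_zero]
  have φsmul : ∀ (a : A) (x : B), φ0 (a • x) = a • φ0 x := by
    intro a x
    apply hM.1
    ext
    · simp only [Algebra.smul_def, map_mul, hspec1, Algebra.algebraMap_self, RingHom.id_apply]
      ring
    · simp only [Algebra.smul_def, map_mul, hspec2, mul_zero, Algebra.algebraMap_self,
        RingHom.id_apply]
  let φ : B →ₗ[A] A := ⟨⟨φ0, φadd⟩, φsmul⟩
  let Φ : B ⊗[A] A' →ₗ[A] A' :=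
    TensorProduct.lift ((LinearMap.mul A A').comp ((Algebra.linearMap A A').comp φ))
  have hΦ : Φ ((1 : B) ⊗ₜ[A] z) = algebraMap A A' (φ0 1) * z := rfl
  have hφ1 : φ0 1 = i := by
    apply hM.1
    ext
    · simp only [hspec1, mul_one]
    · simp only [hspec2, Ideal.Quotient.eq_zero_iff_mem.mpr hi]
  rw [hz, map_zero] at hΦ
  rw [← hφ1]
  exact hΦ.symm

end Aux

section Aux2

variable {A B A' : Type*} [CommRing A] [CommRing B] [CommRing A'] [Algebra A B] [Algebra A A']
  {I : Ideal A}

/-- Any `b ⊗ y` with `y ∈ IA'` is of the form `1 ⊗ x` with `x ∈ IA'`. -/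
lemma milnor_tmul (hM : IsMilnorSquare (algebraMap A B) I) {y : A'}
    (hy : y ∈ I.map (algebraMap A A')) (b : B) :
    ∃ x ∈ I.map (algebraMap A A'), b ⊗ₜ[A] y = (1 : B) ⊗ₜ[A] x := by
  have hy' : y ∈ Submodule.span A' ((algebraMap A A') '' (I : Set A)) := hy
  clear hy
  induction hy' using Submodule.span_induction with
  | mem w hw =>
    obtain ⟨i, hi, rfl⟩ := hw
    obtain ⟨j, hjI, hj⟩ := milnor_lift hM hi b
    refine ⟨algebraMap A A' j, Ideal.mem_map_of_mem _ hjI, ?_⟩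
    rw [Algebra.algebraMap_eq_smul_one (A := A') i, TensorProduct.tmul_smul,
      TensorProduct.smul_tmul', Algebra.smul_def, ← hj,
      Algebra.algebraMap_eq_smul_one (A := A') j, TensorProduct.tmul_smul,
      TensorProduct.smul_tmul', Algebra.smul_def, mul_one]
  | zero => exact ⟨0, Ideal.zero_mem _, by rw [TensorProduct.tmul_zero, TensorProduct.tmul_zero]⟩
  | add u v hu hv ihu ihv =>
    obtain ⟨x1, hx1, h1⟩ := ihu
    obtain ⟨x2, hx2, h2⟩ := ihv
    exact ⟨x1 + x2, Ideal.add_mem _ hx1 hx2,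
      by rw [TensorProduct.tmul_add, TensorProduct.tmul_add, h1, h2]⟩
  | smul a w hw ihw =>
    obtain ⟨x, hx, h⟩ := ihw
    refine ⟨a * x, Ideal.mul_mem_left _ a hx, ?_⟩
    have e1 : b ⊗ₜ[A] (a • w) = (1 ⊗ₜ[A] a) * (b ⊗ₜ[A] w) := by
      rw [Algebra.TensorProduct.tmul_mul_tmul, one_mul, smul_eq_mul]
    rw [e1, h, Algebra.TensorProduct.tmul_mul_tmul, one_mul]

/-- Any element of `(IA')(B ⊗ A')` is of the form `1 ⊗ x` with `x ∈ IA'`. -/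
lemma milnor_tensor_ideal (hM : IsMilnorSquare (algebraMap A B) I) {t : B ⊗[A] A'}
    (ht : t ∈ (I.map (algebraMap A A')).map
      (Algebra.TensorProduct.includeRight (R := A) (A := B) (B := A')).toRingHom) :
    ∃ x ∈ I.map (algebraMap A A'), t = (1 : B) ⊗ₜ[A] x := by
  have ht' : t ∈ Submodule.span (B ⊗[A] A')
      ((Algebra.TensorProduct.includeRight (R := A) (A := B) (B := A')).toRingHom ''
        (I.map (algebraMap A A') : Set A')) := ht
  clear ht
  induction ht' using Submodule.span_induction with
  | mem w hw =>
    obtain ⟨x, hx, rfl⟩ := hw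
    exact ⟨x, hx, rfl⟩
  | zero => exact ⟨0, Ideal.zero_mem _, by rw [TensorProduct.tmul_zero]⟩
  | add u v hu hv ihu ihv =>
    obtain ⟨x1, hx1, h1⟩ := ihu
    obtain ⟨x2, hx2, h2⟩ := ihv
    exact ⟨x1 + x2, Ideal.add_mem _ hx1 hx2, by rw [h1, h2, TensorProduct.tmul_add]⟩
  | smul u w hw ihw =>
    obtain ⟨x, hx, rfl⟩ := ihw
    clear hw
    induction u using TensorProduct.induction_on with
    | zero => exact ⟨0, Ideal.zero_mem _, by rw [TensorProduct.tmul_zero, zero_smul]⟩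
    | tmul b a' =>
      have e1 : (b ⊗ₜ[A] a') • ((1 : B) ⊗ₜ[A] x) = b ⊗ₜ[A] (a' * x) := by
        rw [smul_eq_mul, Algebra.TensorProduct.tmul_mul_tmul, mul_one]
      rw [e1]
      exact milnor_tmul hM (Ideal.mul_mem_left _ a' hx) b
    | add u v ihu ihv =>
      obtain ⟨x1, hx1, h1⟩ := ihu
      obtain ⟨x2, hx2, h2⟩ := ihv
      refine ⟨x1 + x2, Ideal.add_mem _ hx1 hx2, ?_⟩
      rw [add_smul, h1, h2, TensorProduct.tmul_add]

end Aux2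

/-- Milnor squares are stable under base change along any map to a reduced ring: if
`(A → B, I)` is a Milnor square and `A → A'` is a ring homomorphism with `A'` reduced,
then `(A' → B ⊗[A] A', IA')` is again a Milnor square. -/
theorem isMilnorSquare_baseChange_of_reduced {A B A' : Type*}
    [CommRing A] [CommRing B] [CommRing A'] [Algebra A B] [Algebra A A']
    [IsReduced A'] (I : Ideal A) (hM : IsMilnorSquare (algebraMap A B) I) :
    IsMilnorSquare
      (Algebra.TensorProduct.includeRight (R := A) (A := B) (B := A')).toRingHom
      (I.map (algebraMap A A')) := by
  constructor
  · -- injectivity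
    intro x y h
    simp only [Prod.mk.injEq] at h
    have hg : (1 : B) ⊗ₜ[A] x = (1 : B) ⊗ₜ[A] y := h.1
    have hz : (1 : B) ⊗ₜ[A] (x - y) = 0 := by
      rw [TensorProduct.tmul_sub, sub_eq_zero]; exact hg
    have hzI : x - y ∈ I.map (algebraMap A A') := Ideal.Quotient.eq.mp h.2
    have hann : ∀ w ∈ I.map (algebraMap A A'), w * (x - y) = 0 := by
      intro w hw
      have hw' : w ∈ Submodule.span A' ((algebraMap A A') '' (I : Set A)) := hw
      clear hw
      induction hw' using Submodule.span_induction with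
      | mem w hw =>
        obtain ⟨i, hi, rfl⟩ := hw
        exact milnor_mul_eq_zero hM hi hz
      | zero => rw [zero_mul]
      | add u v hu hv ihu ihv => rw [add_mul, ihu, ihv, add_zero]
      | smul a w hw ihw => rw [smul_eq_mul, mul_assoc, ihw, mul_zero]
    have hsq : (x - y) * (x - y) = 0 := hann _ hzI
    have hz0 : x - y = 0 := by
      have hn : IsNilpotent (x - y) := ⟨2, by rwa [pow_two]⟩
      exact hn.eq_zero
    exact sub_eq_zero.mp hz0
  · -- surjectivity
    intro b c h
    obtain ⟨c₀, rfl⟩ := Ideal.Quotient.mk_surjective c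
    have h' : Ideal.Quotient.mk _ b = Ideal.Quotient.mk _
        ((Algebra.TensorProduct.includeRight (R := A) (A := B) (B := A')).toRingHom c₀) := h
    have hmem : b - (1 : B) ⊗ₜ[A] c₀ ∈ (I.map (algebraMap A A')).map
        (Algebra.TensorProduct.includeRight (R := A) (A := B) (B := A')).toRingHom :=
      Ideal.Quotient.eq.mp h'
    obtain ⟨x, hxI, hx⟩ := milnor_tensor_ideal hM hmem
    refine ⟨c₀ + x, ?_, ?_⟩
    · show (1 : B) ⊗ₜ[A] (c₀ + x) = b
      rw [TensorProduct.tmul_add, ← hx]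
      ring
    · rw [map_add, Ideal.Quotient.eq_zero_iff_mem.mpr hxI, add_zero]
end

section
/- Let f : A → B and I ⊆ A form a Milnor square, i.e., A → B ×_{B/IB} A/I is an isomorphism. Then for every A-subalgebra B' ⊆ B (in particular for every finitely generated A-subalgebra), the pair (A → B', I) is again a Milnor square: the natural map A → B' ×_{B'/IB'} A/I is an isomorphism. Consequently, every Milnor square (A → B, I) is the filtered colimit of the Milnor squares (A → B_α, I) where B_α ranges over the finitely generated A-subalgebras of B. -/
open scoped TensorProduct

/-- If `(A → B, I)` is a Milnor square, then for every `A`-subalgebra `B' ⊆ B` the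
pair `(A → B', I)` is again a Milnor square. Moreover, the finitely generated
`A`-subalgebras of `B` form a directed family whose union is `B`, so every Milnor
square `(A → B, I)` is the filtered colimit of the Milnor squares `(A → B_α, I)` over
the finitely generated `A`-subalgebras `B_α ⊆ B`. -/
theorem isMilnorSquare_subalgebra {A B : Type*} [CommRing A] [CommRing B]
    [Algebra A B] (I : Ideal A) (hM : IsMilnorSquare (algebraMap A B) I) :
    (∀ B' : Subalgebra A B, IsMilnorSquare (algebraMap A B') I) ∧
    DirectedOn (· ≤ ·) {B' : Subalgebra A B | B'.FG} ∧
    ∀ b : B, ∃ B' : Subalgebra A B, B'.FG ∧ b ∈ B' := by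
  obtain ⟨hinj, hsurj⟩ := hM
  refine ⟨fun B' => ?_, ?_, fun b => ⟨Algebra.adjoin A {b}, ⟨{b}, by simp⟩,
    Algebra.self_mem_adjoin_singleton A b⟩⟩
  · constructor
    · intro a a' h
      apply hinj
      simp only [Prod.mk.injEq] at h ⊢
      exact ⟨congrArg (B'.val) h.1, h.2⟩
    · intro b c h
      have hcomp : B'.val.toRingHom.comp (algebraMap A B') = algebraMap A B := by
        ext a; simp
      have hle' : I.map (algebraMap A B') ≤
          (I.map (algebraMap A B)).comap B'.val.toRingHom := by
        rw [Ideal.map_le_iff_le_comap]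
        intro a ha
        simp only [Ideal.mem_comap]
        simpa using Ideal.mem_map_of_mem (algebraMap A B) ha
      set φ := Ideal.quotientMap (I.map (algebraMap A B)) B'.val.toRingHom hle'
      have key : Ideal.Quotient.mk (I.map (algebraMap A B)) (b : B)
          = quotientMapOfMilnor (algebraMap A B) I c := by
        have h2 := congrArg φ h
        rw [Ideal.quotientMap_mk] at h2
        refine h2.trans ?_
        obtain ⟨a, rfl⟩ := Ideal.Quotient.mk_surjective c
        simp only [φ, quotientMapOfMilnor, Ideal.Quotient.lift_mk, RingHom.comp_apply,
          Ideal.quotientMap_mk]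
        rfl
      obtain ⟨a, ha1, ha2⟩ := hsurj (b : B) c key
      exact ⟨a, Subtype.ext (by simpa using ha1), ha2⟩
  · classical
    rintro B1 ⟨s, hs⟩ B2 ⟨t, ht⟩
    refine ⟨B1 ⊔ B2, ⟨s ∪ t, ?_⟩, le_sup_left, le_sup_right⟩
    rw [Finset.coe_union, Algebra.adjoin_union, hs, ht]
end

section
/- Let X be a quasi-compact quasi-separated scheme. Then the subspace X^gen ⊆ X of generic points of X, with the induced topology, is Hausdorff and its topology has a basis of clopen (simultaneously closed and open) subsets. -/
open AlgebraicGeometry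

/-- If `p` is a minimal prime and `p` lies in the closure of a basic open `D(g)`,
then `p ∈ D(g)`. -/
lemma aux_min_mem_basicOpen_of_mem_closure {R : Type*} [CommRing R] {p : PrimeSpectrum R}
    (hp : p.asIdeal ∈ minimalPrimes R) {g : R}
    (hcl : p ∈ closure (PrimeSpectrum.basicOpen g : Set (PrimeSpectrum R))) :
    p ∈ PrimeSpectrum.basicOpen g := by
  by_contra hg
  have hgp : g ∈ p.asIdeal := by simpa [PrimeSpectrum.mem_basicOpen] using hg
  haveI : p.asIdeal.IsPrime := p.isPrime
  have hnil : IsNilpotent (algebraMap R (Localization p.asIdeal.primeCompl) g) := by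
    haveI := Ring.KrullDimLE.of_isLocalization p.asIdeal hp (Localization p.asIdeal.primeCompl)
    rw [Ring.KrullDimLE.isNilpotent_iff_mem_maximalIdeal]
    exact (IsLocalization.AtPrime.to_map_mem_maximal_iff _ p.asIdeal g).mpr hgp
  obtain ⟨n, hn⟩ := hnil
  rw [← map_pow] at hn
  obtain ⟨⟨s, hs⟩, hsg⟩ := (IsLocalization.map_eq_zero_iff p.asIdeal.primeCompl _ _).mp hn
  have hps : p ∈ PrimeSpectrum.basicOpen s := hs
  obtain ⟨q, hq1, hq2⟩ :=
    mem_closure_iff.mp hcl _ (PrimeSpectrum.basicOpen s).isOpen hps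
  have h0 : s * g ^ n ∈ q.asIdeal := by
    rw [hsg]; exact q.asIdeal.zero_mem
  rcases q.isPrime.mem_or_mem h0 with h | h
  · exact hq1 h
  · exact hq2 (q.isPrime.mem_of_pow_mem _ h)

/-- If `p` is a minimal prime and `p` lies in the closure of a quasi-compact open,
then `p` is in that open. -/
lemma aux_min_mem_of_mem_closure {R : Type*} [CommRing R] {p : PrimeSpectrum R}
    (hp : p.asIdeal ∈ minimalPrimes R) {s : Set (PrimeSpectrum R)}
    (ho : IsOpen s) (hc : IsCompact s) (hcl : p ∈ closure s) : p ∈ s := by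
  obtain ⟨t, rfl⟩ := PrimeSpectrum.isCompact_isOpen_iff.mp ⟨hc, ho⟩
  have he : (PrimeSpectrum.zeroLocus (t : Set R))ᶜ
      = ⋃ g ∈ t, (PrimeSpectrum.basicOpen g : Set (PrimeSpectrum R)) := by
    ext x
    simp [PrimeSpectrum.mem_zeroLocus, PrimeSpectrum.mem_basicOpen, Set.subset_def]
  rw [he] at hcl ⊢
  rw [Finset.closure_biUnion] at hcl
  obtain ⟨g, hg, hx⟩ := Set.mem_iUnion₂.mp hcl
  exact Set.mem_iUnion₂.mpr ⟨g, hg, aux_min_mem_basicOpen_of_mem_closure hp hx⟩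

/-- In a quasi-separated scheme, a generic point lying in the closure of a
quasi-compact open lies in that open. -/
lemma aux_generic_mem_of_mem_closure (X : Scheme) [QuasiSeparatedSpace X]
    {V : Set X} (hVo : IsOpen V) (hVc : IsCompact V) {y : X}
    (hy : ∀ z : X, z ⤳ y → z = y) (hcl : y ∈ closure V) : y ∈ V := by
  obtain ⟨_, ⟨W, hW, rfl⟩, hyW, -⟩ :=
    X.isBasis_affineOpens.exists_subset_of_mem_open (Set.mem_univ y) isOpen_univ
  set f := hW.fromSpec
  have hemb : Topology.IsOpenEmbedding f.base :=
    haveI := IsAffineOpen.isOpenImmersion_fromSpec hW; f.isOpenEmbedding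
  have hrange : Set.range f.base = (W : Set X) := hW.range_fromSpec
  obtain ⟨p, hp⟩ : ∃ p, f.base p = y := by
    rw [← hrange] at hyW; exact hyW
  have hpmin : p.asIdeal ∈ minimalPrimes Γ(X, W) := by
    refine (PrimeSpectrum.stableUnderGeneralization_singleton (x := p)).mp ?_
    intro a b hab ha
    change a = p at ha; change b = p
    subst ha
    have : f.base b ⤳ f.base a := hab.map f.base.hom.continuous
    rw [hp] at this
    have hb : f.base b = y := hy _ this
    exact hemb.injective (hb.trans hp.symm)
  have hVW : IsCompact (V ∩ (W : Set X)) :=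
    QuasiSeparatedSpace.inter_isCompact V W hVo hVc W.isOpen hW.isCompact
  have hsub : V ∩ (W : Set X) ⊆ Set.range f.base := by
    rw [hrange]; exact Set.inter_subset_right
  have hpreq : f.base ⁻¹' V = f.base ⁻¹' (V ∩ (W : Set X)) := by
    ext z
    simp only [Set.mem_preimage, Set.mem_inter_iff, iff_self_and]
    intro _
    rw [← hrange]; exact Set.mem_range_self z
  have hsc : IsCompact (f.base ⁻¹' V) := by
    rw [hpreq]
    exact hemb.isInducing.isCompact_preimage' hVW hsub
  have hso : IsOpen (f.base ⁻¹' V) := hVo.preimage f.base.hom.continuous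
  have hpcl : p ∈ closure (f.base ⁻¹' V) := by
    rw [mem_closure_iff]
    intro o ho hpo
    obtain ⟨v, ⟨z, hz, rfl⟩, hvV⟩ :=
      mem_closure_iff.mp hcl (f.base '' o) (hemb.isOpenMap o ho) ⟨p, hpo, hp⟩
    exact ⟨z, hz, hvV⟩
  have := aux_min_mem_of_mem_closure hpmin hso hsc hpcl
  rw [← hp]
  exact this

/-- Let `X` be a quasi-compact quasi-separated scheme. Then the subspace `X^gen ⊆ X`
of generic points of `X` (points admitting no nontrivial generalization) is Hausdorff
and its topology has a basis of clopen sets. -/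
theorem genericPoints_t2_and_clopen_basis (X : Scheme) [CompactSpace X]
    [QuasiSeparatedSpace X] :
    T2Space {x : X | ∀ y : X, y ⤳ x → y = x} ∧
    TopologicalSpace.IsTopologicalBasis
      {s : Set {x : X | ∀ y : X, y ⤳ x → y = x} | IsClopen s} := by
  set G : Set X := {x : X | ∀ y : X, y ⤳ x → y = x} with hG
  -- key: clopen neighborhoods inside any open set
  have key : ∀ (a : G) (U : Set X), IsOpen U → (a : X) ∈ U →
      ∃ v : Set G, IsClopen v ∧ a ∈ v ∧ v ⊆ Subtype.val ⁻¹' U := by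
    intro a U hU haU
    obtain ⟨_, ⟨W, hW, rfl⟩, haW, hWU⟩ :=
      X.isBasis_affineOpens.exists_subset_of_mem_open haU hU
    refine ⟨Subtype.val ⁻¹' (W : Set X), ⟨?_, (W.isOpen).preimage continuous_subtype_val⟩,
      haW, fun z hz => hWU hz⟩
    have hcl : Subtype.val ⁻¹' (W : Set X)
        = (Subtype.val : G → X) ⁻¹' (closure (W : Set X)) := by
      ext z
      simp only [Set.mem_preimage]
      constructor
      · exact fun h => subset_closure h
      · intro h
        exact aux_generic_mem_of_mem_closure X W.isOpen hW.isCompact z.2 h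
    rw [hcl]
    exact isClosed_closure.preimage continuous_subtype_val
  constructor
  · refine ⟨fun a b hab => ?_⟩
    have hUa : (a : X) ∈ (closure {(b : X)})ᶜ := by
      intro h
      have : (b : X) ⤳ (a : X) := specializes_iff_mem_closure.mpr h
      exact hab (Subtype.ext (a.2 _ this)).symm
    obtain ⟨v, hv, hav, hvU⟩ := key a _ (isClosed_closure.isOpen_compl) hUa
    refine ⟨v, vᶜ, hv.2, hv.1.isOpen_compl, hav, ?_, disjoint_compl_right⟩
    intro hbv
    exact (hvU hbv) (subset_closure rfl)
  · refine TopologicalSpace.isTopologicalBasis_of_isOpen_of_nhds (fun s hs => hs.2) ?_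
    intro a u hau hu
    obtain ⟨U, hU, rfl⟩ := isOpen_induced_iff.mp hu
    obtain ⟨v, hv, hav, hvU⟩ := key a U hU hau
    exact ⟨v, hv, hav, hvU⟩
end
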